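/- arXiv:1706.09046 — 5 statements merged into one kernel-verified Lean document; each statement's English description precedes it below -/
import Mathlib

section
/- Let p ≥ 1 and q ≥ 0 be real numbers, λ ∈ ℂ, and set a = (p+2q+2λ)/4, b = (p+2q−2λ)/4, c = (p+q+1)/2. Let T > 0 and let g : ℝ → ℂ be twice differentiable on the open interval (−sinh²T, 0). Define f : (0,T) → ℂ by f(t) = g(−sinh²t). If f satisfies f''(t) + ((p+q)·coth t + q·tanh t)·f'(t) = (λ² − (p+2q)²/4)·f(t) for all t ∈ (0,T), then g satisfies the hypergeometric equation z(z−1)·g''(z) + ((a+b+1)z − c)·g'(z) + ab·g(z) = 0 for all z ∈ (−sinh²T, 0). -/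
/-- Change of variable `z = −sinh²t` transforming the radial eigenvalue equation
`f'' + ((p+q) coth t + q tanh t) f' = (λ² − (p+2q)²/4) f` on `(0,T)` into the
hypergeometric equation `z(z−1) g'' + ((a+b+1)z − c) g' + ab g = 0` on `(−sinh²T, 0)`,
with `a = (p+2q+2λ)/4`, `b = (p+2q−2λ)/4`, `c = (p+q+1)/2`. -/
theorem hypergeometric_from_radial (p q : ℝ) (hp : 1 ≤ p) (hq : 0 ≤ q) (lam : ℂ)
    (a b c : ℂ)
    (ha : a = ((p : ℂ) + 2 * (q : ℂ) + 2 * lam) / 4)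
    (hb : b = ((p : ℂ) + 2 * (q : ℂ) - 2 * lam) / 4)
    (hc : c = ((p : ℂ) + (q : ℂ) + 1) / 2)
    (T : ℝ) (hT : 0 < T) (g : ℝ → ℂ)
    (hg1 : ∀ z ∈ Set.Ioo (-(Real.sinh T) ^ 2) (0 : ℝ), DifferentiableAt ℝ g z)
    (hg2 : ∀ z ∈ Set.Ioo (-(Real.sinh T) ^ 2) (0 : ℝ), DifferentiableAt ℝ (deriv g) z)
    (f : ℝ → ℂ) (hf : ∀ t : ℝ, f t = g (-(Real.sinh t) ^ 2))
    (hode : ∀ t ∈ Set.Ioo (0 : ℝ) T,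
      deriv (deriv f) t
        + (((p + q) * (Real.cosh t / Real.sinh t) + q * Real.tanh t : ℝ) : ℂ) * deriv f t
        = (lam ^ 2 - ((p : ℂ) + 2 * (q : ℂ)) ^ 2 / 4) * f t) :
    ∀ z ∈ Set.Ioo (-(Real.sinh T) ^ 2) (0 : ℝ),
      (z : ℂ) * ((z : ℂ) - 1) * deriv (deriv g) z
        + ((a + b + 1) * (z : ℂ) - c) * deriv g z + a * b * g z = 0 := by
  intro z hz
  obtain ⟨hz1, hz2⟩ := hz
  have hzneg : 0 < -z := by linarith
  set t : ℝ := Real.arsinh (Real.sqrt (-z)) with ht_def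
  have hsinht : Real.sinh t = Real.sqrt (-z) := Real.sinh_arsinh _
  have hst_pos : 0 < Real.sinh t := by rw [hsinht]; exact Real.sqrt_pos.mpr hzneg
  have ht0 : 0 < t := Real.sinh_pos_iff.mp hst_pos
  have hsq : Real.sinh t ^ 2 = -z := by rw [hsinht, Real.sq_sqrt hzneg.le]
  have hsT : Real.sinh t < Real.sinh T := by
    rw [hsinht]
    exact (Real.sqrt_lt' (Real.sinh_pos_iff.mpr hT)).mpr (by linarith)
  have htT : t < T := Real.sinh_lt_sinh.mp hsT
  have ht : t ∈ Set.Ioo (0 : ℝ) T := ⟨ht0, htT⟩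
  have hzt : -(Real.sinh t) ^ 2 = z := by rw [hsq]; ring
  -- φ maps (0,T) into the z-interval
  have hmap : ∀ s ∈ Set.Ioo (0 : ℝ) T,
      -(Real.sinh s) ^ 2 ∈ Set.Ioo (-(Real.sinh T) ^ 2) (0 : ℝ) := by
    intro s hs
    have h1 : 0 < Real.sinh s := Real.sinh_pos_iff.mpr hs.1
    have h2 : Real.sinh s < Real.sinh T := Real.sinh_lt_sinh.mpr hs.2
    constructor <;> nlinarith
  -- derivative of the change of variable
  have hφ : ∀ s : ℝ, HasDerivAt (fun u => -(Real.sinh u) ^ 2)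
      (-(2 * Real.sinh s * Real.cosh s)) s := by
    intro s
    have h := ((Real.hasDerivAt_sinh s).pow 2).neg
    simp at h; exact h
  -- first derivative of f on (0,T)
  have hfd : ∀ s ∈ Set.Ioo (0 : ℝ) T, HasDerivAt f
      ((-(2 * Real.sinh s * Real.cosh s)) • deriv g (-(Real.sinh s) ^ 2)) s := by
    intro s hs
    have hgd := (hg1 _ (hmap s hs)).hasDerivAt
    have hcomp := hgd.scomp s (hφ s)
    have hfe : f = fun u => g (-(Real.sinh u) ^ 2) := funext hf
    rw [hfe]
    exact hcomp
  have hdf : ∀ s ∈ Set.Ioo (0 : ℝ) T, deriv f s =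
      ((-(2 * Real.sinh s * Real.cosh s) : ℝ) : ℂ) * deriv g (-(Real.sinh s) ^ 2) := by
    intro s hs
    rw [(hfd s hs).deriv, Complex.real_smul]
  -- second derivative of f at t
  have hmem : Set.Ioo (0 : ℝ) T ∈ nhds t := Ioo_mem_nhds ht0 htT
  have heq : deriv f =ᶠ[nhds t]
      (fun s => ((-(2 * Real.sinh s * Real.cosh s) : ℝ) : ℂ) * deriv g (-(Real.sinh s) ^ 2)) :=
    Filter.eventuallyEq_of_mem hmem hdf
  have h1 : HasDerivAt (fun s => ((-(2 * Real.sinh s * Real.cosh s) : ℝ) : ℂ))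
      ((-(2 * (Real.cosh t ^ 2 + Real.sinh t ^ 2)) : ℝ) : ℂ) t := by
    have hr : HasDerivAt (fun s => -(2 * Real.sinh s * Real.cosh s))
        (-(2 * (Real.cosh t ^ 2 + Real.sinh t ^ 2))) t := by
      have h := (((Real.hasDerivAt_sinh t).mul (Real.hasDerivAt_cosh t)).const_mul 2).neg
      have hfun : (fun s => -(2 * Real.sinh s * Real.cosh s))
          = fun x => -(2 * (Real.sinh x * Real.cosh x)) := by funext x; ring
      rw [hfun]
      exact h.congr_deriv (by ring)
    exact hr.ofReal_comp
  have h2 : HasDerivAt (fun s => deriv g (-(Real.sinh s) ^ 2))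
      ((-(2 * Real.sinh t * Real.cosh t)) • deriv (deriv g) (-(Real.sinh t) ^ 2)) t := by
    have hgd2 := (hg2 _ (hmap t ht)).hasDerivAt
    exact hgd2.scomp t (hφ t)
  have h2' : HasDerivAt (fun s => deriv g (-(Real.sinh s) ^ 2))
      (((-(2 * Real.sinh t * Real.cosh t) : ℝ) : ℂ) * deriv (deriv g) z) t := by
    rw [hzt] at h2
    rwa [Complex.real_smul] at h2
  have hddf : deriv (deriv f) t =
      ((-(2 * (Real.cosh t ^ 2 + Real.sinh t ^ 2)) : ℝ) : ℂ) * deriv g z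
        + ((-(2 * Real.sinh t * Real.cosh t) : ℝ) : ℂ)
          * (((-(2 * Real.sinh t * Real.cosh t) : ℝ) : ℂ) * deriv (deriv g) z) := by
    rw [heq.deriv_eq]
    have hmd := (h1.mul h2').deriv
    rw [hzt] at hmd
    exact hmd
  -- substitute into the ODE
  have Hode := hode t ht
  rw [hddf, hdf t ht, hzt, hf t, hzt, Real.tanh_eq_sinh_div_cosh] at Hode
  have hs2 : ((Real.sinh t : ℝ) : ℂ) ^ 2 = -(z : ℂ) := by
    rw [← Complex.ofReal_pow, hsq]; push_cast; ring
  have hc2 : ((Real.cosh t : ℝ) : ℂ) ^ 2 = 1 - (z : ℂ) := by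
    rw [← Complex.ofReal_pow, Real.cosh_sq, Complex.ofReal_add, Complex.ofReal_pow,
      Complex.ofReal_one]
    rw [show (((Real.sinh t : ℝ)) : ℂ) ^ 2 = -(z : ℂ) from hs2]
    ring
  have hsne : Complex.sinh (t : ℂ) ≠ 0 := by
    rw [← Complex.ofReal_sinh, Ne, Complex.ofReal_eq_zero]
    exact hst_pos.ne'
  have hcne : Complex.cosh (t : ℂ) ≠ 0 := by
    rw [← Complex.ofReal_cosh, Ne, Complex.ofReal_eq_zero]
    exact (Real.cosh_pos (x := t)).ne'
  have hkey : (((p + q) * (Real.cosh t / Real.sinh t) + q * (Real.sinh t / Real.cosh t) : ℝ) : ℂ)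
      * (((-(2 * Real.sinh t * Real.cosh t) : ℝ) : ℂ) * deriv g z)
      = (-(2 * ((p : ℂ) + q)) * Complex.cosh (t : ℂ) ^ 2
          - 2 * (q : ℂ) * Complex.sinh (t : ℂ) ^ 2) * deriv g z := by
    push_cast
    field_simp
    ring
  rw [hkey] at Hode
  push_cast at Hode hs2 hc2
  rw [ha, hb, hc]
  linear_combination (1 / 4 : ℂ) * Hode
    + (-Complex.cosh (t : ℂ) ^ 2 * deriv (deriv g) z + ((1 + (q : ℂ)) / 2) * deriv g z) * hs2
    + ((z : ℂ) * deriv (deriv g) z + ((1 + (p : ℂ) + (q : ℂ)) / 2) * deriv g z) * hc2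
end

section
/- Let p ≥ 1 and q ≥ 0 be integers, λ ∈ ℂ, and set a = (p+2q+2λ)/4, b = (p+2q−2λ)/4, c = (p+q+1)/2. Define f : ℝ → ℂ by f(t) = Σ_{k=0}^∞ ((a)_k (b)_k / ((c)_k · k!)) · (−sinh²t)^k for t with |sinh t| < 1. Then for all t ∈ (0, log(1+√2)) the function f satisfies f''(t) + ((p+q)·coth t + q·tanh t)·f'(t) = (λ² − (p+2q)²/4)·f(t). -/
open Filter Real Complex Topology Metric

lemma RH.sinh_log_sqrt : Real.sinh (Real.log (1 + Real.sqrt 2)) = 1 := by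
  rw [Real.sinh_eq, Real.exp_log (by positivity), Real.exp_neg, Real.exp_log (by positivity)]
  have h2 : Real.sqrt 2 ^ 2 = 2 := Real.sq_sqrt (by norm_num)
  have hne : (1 : ℝ) + Real.sqrt 2 ≠ 0 := by positivity
  field_simp
  nlinarith [h2]

lemma RH.tendsto_div_nat (A B : ℂ) (hB : 0 ≤ B.re) :
    Tendsto (fun k : ℕ => (A + k)/(B + k)) atTop (𝓝 1) := by
  have hsmall : Tendsto (fun k : ℕ => (A - B)/(B + k)) atTop (𝓝 0) := by
    apply squeeze_zero_norm' (a := fun k : ℕ => ‖A - B‖ / k)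
    · filter_upwards [eventually_ge_atTop 1] with k hk
      rw [norm_div]
      apply div_le_div_of_nonneg_left (norm_nonneg _)
      · exact_mod_cast Nat.lt_of_lt_of_le Nat.zero_lt_one hk
      · calc (k : ℝ) ≤ B.re + k := by linarith
          _ ≤ ‖B + (k:ℂ)‖ := by
            have := Complex.re_le_norm (B + k)
            simpa [Complex.add_re] using this
    · exact tendsto_const_div_atTop_nhds_zero_nat _
  have h1 : Tendsto (fun k : ℕ => 1 + (A - B)/(B + k)) atTop (𝓝 1) := by
    simpa using tendsto_const_nhds.add hsmall
  apply h1.congr'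
  filter_upwards [eventually_ge_atTop 1] with k hk
  have hBk : B + (k:ℂ) ≠ 0 := by
    intro h
    have h0 : (B + (k:ℂ)).re = 0 := by rw [h]; simp
    rw [Complex.add_re] at h0
    have hk1 : (1:ℝ) ≤ k := by exact_mod_cast hk
    simp only [Complex.natCast_re] at h0
    linarith
  field_simp
  ring

lemma RH.tendsto_div_nat_real (A B : ℝ) (hB : 0 ≤ B) :
    Tendsto (fun k : ℕ => (A + k)/(B + k)) atTop (𝓝 1) := by
  have hsmall : Tendsto (fun k : ℕ => (A - B)/(B + k)) atTop (𝓝 0) := by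
    apply squeeze_zero_norm' (a := fun k : ℕ => |A - B| / k)
    · filter_upwards [eventually_ge_atTop 1] with k hk
      have hk1 : (1:ℝ) ≤ k := by exact_mod_cast hk
      rw [Real.norm_eq_abs, abs_div]
      apply div_le_div_of_nonneg_left (abs_nonneg _) (by linarith)
      rw [_root_.abs_of_nonneg (by linarith : (0:ℝ) ≤ B + (k:ℝ))]
      linarith
    · exact tendsto_const_div_atTop_nhds_zero_nat _
  have h1 : Tendsto (fun k : ℕ => 1 + (A - B)/(B + k)) atTop (𝓝 1) := by
    simpa using tendsto_const_nhds.add hsmall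
  apply h1.congr'
  filter_upwards [eventually_ge_atTop 1] with k hk
  have hk1 : (1:ℝ) ≤ k := by exact_mod_cast hk
  have hBk : B + (k:ℝ) ≠ 0 := by positivity
  field_simp
  ring

lemma RH.summable_norm_geom {g : ℕ → ℂ} {φ : ℕ → ℝ}
    (h : ∀ k, ‖g (k+1)‖ = φ k * ‖g k‖) (hφ : Tendsto φ atTop (𝓝 1))
    {r : ℝ} (hr0 : 0 ≤ r) (hr1 : r < 1) :
    Summable (fun k => ‖g k‖ * r^k) := by
  apply summable_of_ratio_norm_eventually_le (r := (1 + r)/2) (by linarith)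
  have hmul : Tendsto (fun k => φ k * r) atTop (𝓝 r) := by simpa using hφ.mul_const r
  have hev : ∀ᶠ k in atTop, φ k * r ≤ (1 + r)/2 :=
    hmul.eventually_le_const (by linarith)
  filter_upwards [hev] with k hk
  have hterm : ‖g (k+1)‖ * r^(k+1) = (φ k * r) * (‖g k‖ * r^k) := by
    rw [h k]; ring
  rw [Real.norm_of_nonneg (by positivity), Real.norm_of_nonneg (by positivity), hterm]
  have hnn : 0 ≤ ‖g k‖ * r ^ k := by positivity
  nlinarith [norm_nonneg (g k), pow_nonneg hr0 k, mul_le_mul_of_nonneg_right hk hnn]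

lemma RH.hasDerivAt_tsum_pow {g : ℕ → ℂ}
    (hs0 : ∀ r : ℝ, 0 ≤ r → r < 1 → Summable fun k => ‖g k‖ * r^k)
    (hs1 : ∀ r : ℝ, 0 ≤ r → r < 1 →
      Summable fun k => ‖(((k:ℕ):ℂ)+2) * g (k+1)‖ * r^k)
    {z : ℂ} (hz : ‖z‖ < 1) :
    HasDerivAt (fun y => ∑' k, g k * y^k)
      (∑' k, ((((k:ℕ):ℂ)+1) * g (k+1)) * z^k) z := by
  set r : ℝ := (‖z‖ + 1)/2 with hr
  have hr0 : 0 ≤ r := by positivity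
  have hr1 : r < 1 := by rw [hr]; linarith
  have hzr : ‖z‖ < r := by rw [hr]; linarith
  set u : ℕ → ℝ := fun n => ‖g n‖ * ((n:ℝ) * r^(n-1)) with hu
  have hu1 : Summable fun k => u (k+1) := by
    apply Summable.of_nonneg_of_le (fun k => by positivity) _ (hs1 r hr0 hr1)
    intro k
    have h3 : ‖(((k:ℕ):ℂ)+2) * g (k+1)‖ = ((k:ℝ)+2) * ‖g (k+1)‖ := by
      rw [norm_mul]
      congr 1
      have h4 : (((k:ℕ):ℂ)+2) = (((k+2 : ℕ)):ℂ) := by push_cast; ring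
      rw [h4, Complex.norm_natCast]
      push_cast; ring
    rw [h3]
    simp only [hu, Nat.add_sub_cancel]
    have h5 : (((k+1:ℕ)):ℝ) = (k:ℝ)+1 := by push_cast; ring
    rw [h5]
    nlinarith [norm_nonneg (g (k+1)), pow_nonneg hr0 k]
  have huS : Summable u := (summable_nat_add_iff 1).1 hu1
  have hbound : ∀ (n : ℕ) (y : ℂ), ‖y‖ < r → ‖g n * ((n:ℂ) * y^(n-1))‖ ≤ u n := by
    intro n y hy
    have h1 : ‖g n * ((n:ℂ) * y^(n-1))‖ = ‖g n‖ * ((n:ℝ) * ‖y‖^(n-1)) := by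
      simp [norm_mul, norm_pow]
    rw [h1]
    simp only [hu]
    have h2 : ‖y‖^(n-1) ≤ r^(n-1) := pow_le_pow_left₀ (norm_nonneg y) hy.le _
    have hn : (0:ℝ) ≤ n := Nat.cast_nonneg n
    have h3 := mul_le_mul_of_nonneg_left h2 (mul_nonneg (norm_nonneg (g n)) hn)
    calc ‖g n‖ * ((n:ℝ) * ‖y‖^(n-1)) = ‖g n‖ * (n:ℝ) * ‖y‖^(n-1) := by ring
      _ ≤ ‖g n‖ * (n:ℝ) * r^(n-1) := h3
      _ = ‖g n‖ * ((n:ℝ) * r^(n-1)) := by ring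
  have key := hasDerivAt_tsum_of_isPreconnected (u := u) (g := fun n y => g n * y^n)
    (g' := fun n y => g n * ((n:ℂ) * y^(n-1))) huS isOpen_ball
    (convex_ball (0:ℂ) r).isPreconnected
    (fun n y _ => (hasDerivAt_pow n y).const_mul (g n))
    (fun n y hy => hbound n y (mem_ball_zero_iff.1 hy))
    (mem_ball_zero_iff.2 hzr)
    (Summable.of_norm_bounded (hs0 ‖z‖ (norm_nonneg z) hz)
      (fun n => by rw [norm_mul, norm_pow]))
    (mem_ball_zero_iff.2 hzr)
  refine key.congr_deriv ?_
  have hsum' : Summable fun n => g n * ((n:ℂ) * z^(n-1)) :=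
    Summable.of_norm_bounded huS (fun n => hbound n z hzr)
  rw [Summable.tsum_eq_zero_add hsum']
  simp only [Nat.cast_zero, zero_mul, mul_zero, zero_add, Nat.add_sub_cancel]
  exact tsum_congr fun n => by push_cast; ring

set_option maxHeartbeats 3200000 in
/-- The hypergeometric series `f(t) = F(a,b,c; −sinh²t)`, where
`a = (p+2q+2λ)/4`, `b = (p+2q−2λ)/4`, `c = (p+q+1)/2` for integers `p ≥ 1`, `q ≥ 0`,
satisfies the radial eigenvalue equation
`f'' + ((p+q) coth t + q tanh t) f' = (λ² − (p+2q)²/4)` for `0 < t < log(1+√2)`. -/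
theorem radial_ode_of_hypergeometric (p q : ℤ) (hp : 1 ≤ p) (hq : 0 ≤ q) (lam : ℂ)
    (a b c : ℂ)
    (ha : a = ((p : ℂ) + 2 * (q : ℂ) + 2 * lam) / 4)
    (hb : b = ((p : ℂ) + 2 * (q : ℂ) - 2 * lam) / 4)
    (hc : c = ((p : ℂ) + (q : ℂ) + 1) / 2)
    (f : ℝ → ℂ)
    (hf : ∀ t : ℝ, f t = ∑' k : ℕ,
      (∏ i ∈ Finset.range k, (a + i)) * (∏ i ∈ Finset.range k, (b + i)) /
          ((∏ i ∈ Finset.range k, (c + i)) * (Nat.factorial k : ℂ)) *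
        ((-(Real.sinh t) ^ 2 : ℝ) : ℂ) ^ k) :
    ∀ t ∈ Set.Ioo (0 : ℝ) (Real.log (1 + Real.sqrt 2)),
      deriv (deriv f) t
        + ((((p : ℝ) + (q : ℝ)) * (Real.cosh t / Real.sinh t) + (q : ℝ) * Real.tanh t : ℝ) : ℂ)
            * deriv f t
        = (lam ^ 2 - ((p : ℂ) + 2 * (q : ℂ)) ^ 2 / 4) * f t := by
  -- coefficient sequence and its shifts
  set d : ℕ → ℂ := fun k =>
    (∏ i ∈ Finset.range k, (a + i)) * (∏ i ∈ Finset.range k, (b + i)) /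
      ((∏ i ∈ Finset.range k, (c + i)) * (Nat.factorial k : ℂ)) with hddef
  set e₁ : ℕ → ℂ := fun k => (((k:ℕ):ℂ)+1) * d (k+1) with he₁def
  set e₂ : ℕ → ℂ := fun k => (((k:ℕ):ℂ)+1) * e₁ (k+1) with he₂def
  -- nonvanishing facts about c
  have hp' : (1:ℝ) ≤ (p:ℝ) := by exact_mod_cast hp
  have hq' : (0:ℝ) ≤ (q:ℝ) := by exact_mod_cast hq
  have hcR : ∀ k : ℕ, c + k = ((((((p:ℝ)+(q:ℝ)+1)/2 + k) : ℝ)) : ℂ) := by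
    intro k; rw [hc]; push_cast; ring
  have hck : ∀ k : ℕ, c + k ≠ 0 := by
    intro k; rw [hcR k]
    exact Complex.ofReal_ne_zero.2 (by positivity)
  have hcre : 0 ≤ c.re := by
    have := hcR 0
    simp only [Nat.cast_zero, add_zero] at this
    rw [this, Complex.ofReal_re]; positivity
  have hcprod : ∀ k : ℕ, (∏ i ∈ Finset.range k, (c + i)) ≠ 0 :=
    fun k => Finset.prod_ne_zero_iff.2 fun i _ => hck i
  have hfact : ∀ k : ℕ, ((Nat.factorial k : ℕ):ℂ) ≠ 0 :=
    fun k => Nat.cast_ne_zero.2 (Nat.factorial_ne_zero k)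
  have hk1 : ∀ k : ℕ, (1:ℂ) + k ≠ 0 := by
    intro k
    rw [add_comm]
    exact Nat.cast_add_one_ne_zero k
  -- the basic recurrence
  have hrec : ∀ k : ℕ, d (k+1) = ((a + k)/(1 + k)) * ((b + k)/(c + k)) * d k := by
    intro k
    simp only [hddef]
    rw [Finset.prod_range_succ, Finset.prod_range_succ, Finset.prod_range_succ,
      Nat.factorial_succ]
    push_cast
    have := hk1 k
    have := hck k
    have := hcprod k
    have := hfact k
    have : (k:ℂ) + 1 ≠ 0 := Nat.cast_add_one_ne_zero k
    field_simp
    ring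
  set qs : ℕ → ℝ := fun k => ‖((a + k)/(1 + k)) * ((b + k)/(c + k))‖ with hqsdef
  have hrecn : ∀ k : ℕ, ‖d (k+1)‖ = qs k * ‖d k‖ := by
    intro k; rw [hrec k, norm_mul]
  have hq1 : Tendsto qs atTop (𝓝 1) := by
    have h1 := RH.tendsto_div_nat a 1 (by norm_num)
    have h2 := RH.tendsto_div_nat b c hcre
    rw [hqsdef, show (1:ℝ) = ‖(1:ℂ)*(1:ℂ)‖ by norm_num]
    exact (h1.mul h2).norm
  -- norm of natCast + numeral
  have hn2 : ∀ k : ℕ, ‖(((k:ℕ):ℂ)+2)‖ = (k:ℝ)+2 := by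
    intro k
    rw [show (((k:ℕ):ℂ)+2) = (((k+2:ℕ)):ℂ) by push_cast; ring, Complex.norm_natCast]
    push_cast; ring
  have hn1 : ∀ k : ℕ, ‖(((k:ℕ):ℂ)+1)‖ = (k:ℝ)+1 := by
    intro k
    rw [show (((k:ℕ):ℂ)+1) = (((k+1:ℕ)):ℂ) by push_cast; ring, Complex.norm_natCast]
    push_cast; ring
  have hn3 : ∀ k : ℕ, ‖(((k:ℕ):ℂ)+3)‖ = (k:ℝ)+3 := by
    intro k
    rw [show (((k:ℕ):ℂ)+3) = (((k+3:ℕ)):ℂ) by push_cast; ring, Complex.norm_natCast]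
    push_cast; ring
  -- tendsto of shifted qs
  have hqshift : ∀ m : ℕ, Tendsto (fun k => qs (k+m)) atTop (𝓝 1) := by
    intro m
    have := hq1.comp (tendsto_add_atTop_nat m)
    exact this
  -- summability of the three coefficient sequences, in norm, any radius < 1
  have Sd0 : ∀ r : ℝ, 0 ≤ r → r < 1 → Summable fun k => ‖d k‖ * r^k :=
    fun r hr0 hr1 => RH.summable_norm_geom hrecn hq1 hr0 hr1
  have Sd1 : ∀ r : ℝ, 0 ≤ r → r < 1 →
      Summable fun k => ‖(((k:ℕ):ℂ)+2) * d (k+1)‖ * r^k := by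
    intro r hr0 hr1
    apply RH.summable_norm_geom
      (φ := fun k => (((3:ℝ)+k)/((2:ℝ)+k)) * qs (k+1))
    · intro k
      rw [norm_mul, norm_mul, hrecn (k+1)]
      rw [show ((((k+1:ℕ)):ℂ)+2) = (((k:ℕ):ℂ)+3) by push_cast; ring, hn3, hn2]
      have h2 : ((2:ℝ)+k) ≠ 0 := by positivity
      field_simp
      ring
    · have := (RH.tendsto_div_nat_real 3 2 (by norm_num)).mul (hqshift 1)
      simpa using this
    · exact hr0
    · exact hr1
  have Se0 : ∀ r : ℝ, 0 ≤ r → r < 1 → Summable fun k => ‖e₁ k‖ * r^k := by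
    intro r hr0 hr1
    apply RH.summable_norm_geom
      (φ := fun k => (((2:ℝ)+k)/((1:ℝ)+k)) * qs (k+1))
    · intro k
      simp only [he₁def]
      rw [norm_mul, norm_mul, hrecn (k+1)]
      rw [show ((((k+1:ℕ)):ℂ)+1) = (((k:ℕ):ℂ)+2) by push_cast; ring, hn2, hn1]
      have h2 : ((1:ℝ)+k) ≠ 0 := by positivity
      field_simp
      ring
    · have := (RH.tendsto_div_nat_real 2 1 (by norm_num)).mul (hqshift 1)
      simpa using this
    · exact hr0
    · exact hr1
  have Se1 : ∀ r : ℝ, 0 ≤ r → r < 1 →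
      Summable fun k => ‖(((k:ℕ):ℂ)+2) * e₁ (k+1)‖ * r^k := by
    intro r hr0 hr1
    apply RH.summable_norm_geom
      (φ := fun k => ((((3:ℝ)+k)/((2:ℝ)+k)) * (((3:ℝ)+k)/((2:ℝ)+k))) * qs (k+2))
    · intro k
      simp only [he₁def]
      rw [norm_mul, norm_mul, norm_mul, norm_mul, hrecn (k+2)]
      rw [show ((((k+1:ℕ)):ℂ)+2) = (((k:ℕ):ℂ)+3) by push_cast; ring, hn3]
      rw [show ((((k+2:ℕ)):ℂ)+1) = (((k:ℕ):ℂ)+3) by push_cast; ring, hn3]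
      rw [show ((((k+1:ℕ)):ℂ)+1) = (((k:ℕ):ℂ)+2) by push_cast; ring, hn2]
      rw [(rfl : d (k+1+1) = d (k+2))]
      have h2 : ((2:ℝ)+k) ≠ 0 := by positivity
      field_simp
      ring
    · have := ((RH.tendsto_div_nat_real 3 2 (by norm_num)).mul
        (RH.tendsto_div_nat_real 3 2 (by norm_num))).mul (hqshift 2)
      simpa using this
    · exact hr0
    · exact hr1
  -- enter the point
  intro t ht
  obtain ⟨ht0, htL⟩ := ht
  have hsinh1 : Real.sinh t < 1 := by
    have h := Real.sinh_lt_sinh.2 htL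
    rwa [RH.sinh_log_sqrt] at h
  have hsinh0 : 0 < Real.sinh t := Real.sinh_pos_iff.2 ht0
  -- the three sum functions and the substitution
  set F₀ : ℂ → ℂ := fun y => ∑' k, d k * y^k with hF₀def
  set F₁ : ℂ → ℂ := fun y => ∑' k, e₁ k * y^k with hF₁def
  set F₂ : ℂ → ℂ := fun y => ∑' k, e₂ k * y^k with hF₂def
  set Z : ℝ → ℂ := fun u => ((-(Real.sinh u)^2 : ℝ) : ℂ) with hZdef
  set ZD : ℝ → ℂ := fun u => ((-(2 * Real.sinh u * Real.cosh u) : ℝ) : ℂ) with hZDdef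
  set ZDD : ℝ → ℂ := fun u =>
    ((-(2 * (Real.cosh u * Real.cosh u + Real.sinh u * Real.sinh u)) : ℝ) : ℂ) with hZDDdef
  have hfF : ∀ u : ℝ, f u = F₀ (Z u) := fun u => hf u
  set U : Set ℝ := {u : ℝ | |Real.sinh u| < 1} with hUdef
  have hUopen : IsOpen U := by
    have hU : U = Real.sinh ⁻¹' (Set.Ioo (-1) 1) := by
      ext u; simp [hUdef, Set.mem_Ioo, abs_lt]
    rw [hU]
    exact Real.continuous_sinh.isOpen_preimage _ isOpen_Ioo
  have htU : t ∈ U := by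
    simp only [hUdef, Set.mem_setOf_eq, abs_lt]
    constructor <;> linarith
  have hZnorm : ∀ u ∈ U, ‖Z u‖ < 1 := by
    intro u hu
    simp only [hUdef, Set.mem_setOf_eq] at hu
    simp only [hZdef]
    rw [Complex.norm_real, Real.norm_eq_abs, abs_neg, _root_.abs_pow]
    calc |Real.sinh u|^2 < 1^2 := by
          apply pow_lt_pow_left₀ hu (abs_nonneg _)
          norm_num
      _ = 1 := one_pow 2
  -- derivatives of the substitution
  have hZ' : ∀ u : ℝ, HasDerivAt Z (ZD u) u := by
    intro u
    have h1 : HasDerivAt (fun v : ℝ => -(Real.sinh v)^2)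
        (-(2 * Real.sinh u * Real.cosh u)) u := by
      have h2 := ((Real.hasDerivAt_sinh u).pow 2).neg
      exact h2.congr_deriv (by norm_num)
    exact h1.ofReal_comp
  have hZD' : ∀ u : ℝ, HasDerivAt ZD (ZDD u) u := by
    intro u
    have h1 : HasDerivAt (fun v : ℝ => -(2 * Real.sinh v * Real.cosh v))
        (-(2 * (Real.cosh u * Real.cosh u + Real.sinh u * Real.sinh u))) u := by
      have h2 := (((Real.hasDerivAt_sinh u).mul (Real.hasDerivAt_cosh u)).const_mul (2:ℝ)).neg
      have h3 : (fun v : ℝ => -(2 * Real.sinh v * Real.cosh v))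
          = fun v => -(2 * (Real.sinh v * Real.cosh v)) := by ext v; ring
      rw [h3]
      exact h2.congr_deriv (by ring)
    exact h1.ofReal_comp
  -- first derivative of f
  have hderiv1 : ∀ u ∈ U, HasDerivAt f (F₁ (Z u) * ZD u) u := by
    intro u hu
    have hzn := hZnorm u hu
    have hF : HasDerivAt F₀ (F₁ (Z u)) (Z u) := RH.hasDerivAt_tsum_pow Sd0 Sd1 hzn
    have hcomp := hF.scomp u (hZ' u)
    have hfd : HasDerivAt f (ZD u • F₁ (Z u)) u :=
      hcomp.congr_of_eventuallyEq (Filter.Eventually.of_forall fun v => hfF v)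
    simpa [smul_eq_mul, mul_comm] using hfd
  -- second derivative
  have hderiv2 : ∀ u ∈ U, HasDerivAt (fun v => F₁ (Z v) * ZD v)
      (F₂ (Z u) * ZD u * ZD u + F₁ (Z u) * ZDD u) u := by
    intro u hu
    have hzn := hZnorm u hu
    have hG : HasDerivAt F₁ (F₂ (Z u)) (Z u) := RH.hasDerivAt_tsum_pow Se0 Se1 hzn
    have h1 : HasDerivAt (fun v => F₁ (Z v)) (ZD u • F₂ (Z u)) u := hG.scomp u (hZ' u)
    have h2 := h1.mul (hZD' u)
    refine h2.congr_deriv ?_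
    simp only [smul_eq_mul]
    ring
  -- derivative values at t
  have hdf : deriv f t = F₁ (Z t) * ZD t := (hderiv1 t htU).deriv
  have hevd : deriv f =ᶠ[nhds t] (fun v => F₁ (Z v) * ZD v) := by
    filter_upwards [hUopen.mem_nhds htU] with v hv
    exact (hderiv1 v hv).deriv
  have hdf2 : deriv (deriv f) t = F₂ (Z t) * ZD t * ZD t + F₁ (Z t) * ZDD t := by
    rw [hevd.deriv_eq]
    exact (hderiv2 t htU).deriv
  -- the hypergeometric ODE at z₀
  set z₀ : ℂ := Z t with hz₀def
  have hz₀ : ‖z₀‖ < 1 := hZnorm t htU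
  have hSof : ∀ (g : ℕ → ℂ), (Summable fun k => ‖g k‖ * ‖z₀‖^k) →
      Summable (fun k => g k * z₀^k) :=
    fun g h => Summable.of_norm_bounded h
      (fun k => le_of_eq (by rw [norm_mul, norm_pow]))
  have Sd : Summable fun k => d k * z₀^k := hSof d (Sd0 _ (norm_nonneg _) hz₀)
  have Se₁S : Summable fun k => e₁ k * z₀^k := hSof e₁ (Se0 _ (norm_nonneg _) hz₀)
  have Se₂S : Summable fun k => e₂ k * z₀^k := by
    apply Summable.of_norm_bounded (Se1 ‖z₀‖ (norm_nonneg _) hz₀)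
    intro k
    simp only [he₂def]
    simp only [norm_mul, norm_pow, hn1, hn2]
    nlinarith [mul_nonneg (norm_nonneg (e₁ (k+1))) (pow_nonneg (norm_nonneg z₀) k)]
  have Skd : Summable fun k : ℕ => (k:ℂ) * d k * z₀^k := by
    apply (summable_nat_add_iff 1).1
    exact (Se₁S.mul_left z₀).congr (fun k => by simp only [he₁def]; push_cast; ring)
  have Ske : Summable fun k : ℕ => (k:ℂ) * e₁ k * z₀^k := by
    apply (summable_nat_add_iff 1).1
    exact (Se₂S.mul_left z₀).congr (fun k => by simp only [he₂def]; push_cast; ring)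
  have Skkd : Summable fun k : ℕ => (k:ℂ) * ((k:ℂ)-1) * d k * z₀^k := by
    apply (summable_nat_add_iff 2).1
    refine (Se₂S.mul_left (z₀^2)).congr (fun k => ?_)
    have hdd : d (k+1+1) = d (k+2) := rfl
    simp only [he₂def, he₁def, hdd]
    push_cast
    ring
  have hkey : ∀ k : ℕ, ((k:ℂ) + c) * e₁ k = ((k:ℂ) + a) * ((k:ℂ) + b) * d k := by
    intro k
    simp only [he₁def]
    rw [hrec k]
    have h1 := hk1 k
    have h2 := hck k
    field_simp
    ring
  have hi : ∑' k : ℕ, (k:ℂ) * d k * z₀^k = z₀ * F₁ z₀ := by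
    rw [Summable.tsum_eq_zero_add Skd]
    simp only [Nat.cast_zero, zero_mul, pow_zero, mul_one, zero_add]
    have h1 : ∑' (n:ℕ), ((n+1:ℕ):ℂ) * d (n+1) * z₀^(n+1)
        = ∑' n : ℕ, z₀ * (e₁ n * z₀^n) :=
      tsum_congr fun n => by simp only [he₁def]; push_cast; ring
    rw [h1, tsum_mul_left]
  have hii : ∑' k : ℕ, (k:ℂ) * e₁ k * z₀^k = z₀ * F₂ z₀ := by
    rw [Summable.tsum_eq_zero_add Ske]
    simp only [Nat.cast_zero, zero_mul, pow_zero, mul_one, zero_add]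
    have h1 : ∑' (n:ℕ), ((n+1:ℕ):ℂ) * e₁ (n+1) * z₀^(n+1)
        = ∑' n : ℕ, z₀ * (e₂ n * z₀^n) :=
      tsum_congr fun n => by simp only [he₂def]; push_cast; ring
    rw [h1, tsum_mul_left]
  have hiii : ∑' k : ℕ, (k:ℂ) * ((k:ℂ)-1) * d k * z₀^k = z₀^2 * F₂ z₀ := by
    rw [Summable.tsum_eq_zero_add Skkd]
    have hS2 : Summable fun n : ℕ => ((n+1:ℕ):ℂ) * (((n+1:ℕ):ℂ)-1) * d (n+1) * z₀^(n+1) :=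
      (summable_nat_add_iff 1).2 Skkd
    rw [Summable.tsum_eq_zero_add hS2]
    simp only [Nat.cast_zero, zero_mul, pow_zero, mul_one, zero_add, Nat.cast_one]
    norm_num
    have h1 : ∑' (n:ℕ), ((n:ℂ)+1+1) * ((n:ℂ)+1) * d (n+1+1) * z₀^(n+1+1)
        = ∑' n : ℕ, z₀^2 * (e₂ n * z₀^n) := by
      refine tsum_congr fun n => ?_
      have hdd : d (n+1+1) = d (n+2) := rfl
      simp only [he₂def, he₁def, hdd]
      push_cast
      ring
    rw [h1, tsum_mul_left]
  have hODE : z₀ * F₂ z₀ + c * F₁ z₀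
      = z₀^2 * F₂ z₀ + (a+b+1) * (z₀ * F₁ z₀) + a*b*F₀ z₀ := by
    have hA : z₀ * F₂ z₀ + c * F₁ z₀ = ∑' k : ℕ, (((k:ℂ)+c) * e₁ k) * z₀^k := by
      rw [← hii]
      have h1 : c * F₁ z₀ = ∑' k : ℕ, c * (e₁ k * z₀^k) := by
        rw [tsum_mul_left]
      rw [h1, ← Summable.tsum_add Ske (Se₁S.mul_left c)]
      exact tsum_congr fun k => by ring
    have hB : ∑' k : ℕ, (((k:ℂ)+a) * ((k:ℂ)+b) * d k) * z₀^k
        = z₀^2 * F₂ z₀ + (a+b+1) * (z₀ * F₁ z₀) + a*b*F₀ z₀ := by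
      have h1 : ∑' k : ℕ, (((k:ℂ)+a) * ((k:ℂ)+b) * d k) * z₀^k
          = ∑' k : ℕ, ((k:ℂ) * ((k:ℂ)-1) * d k * z₀^k
            + ((a+b+1) * ((k:ℂ) * d k * z₀^k) + (a*b) * (d k * z₀^k))) :=
        tsum_congr fun k => by ring
      rw [h1, Summable.tsum_add Skkd ((Skd.mul_left _).add (Sd.mul_left _)),
        Summable.tsum_add (Skd.mul_left _) (Sd.mul_left _), tsum_mul_left, tsum_mul_left,
        hiii, hi]
      ring
    rw [hA, ← hB]
    exact tsum_congr fun k => by rw [hkey k]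
  -- final algebra
  rw [hdf2, hdf, hfF t]
  set sC : ℂ := ((Real.sinh t : ℝ) : ℂ) with hsCdef
  set cC : ℂ := ((Real.cosh t : ℝ) : ℂ) with hcCdef
  have hsC0 : sC ≠ 0 := Complex.ofReal_ne_zero.2 (ne_of_gt hsinh0)
  have hcC0 : cC ≠ 0 := Complex.ofReal_ne_zero.2 (ne_of_gt (Real.cosh_pos t))
  have hch : cC^2 = 1 + sC^2 := by
    rw [hsCdef, hcCdef]
    exact_mod_cast Real.cosh_sq' t
  have hz₀s : z₀ = -sC^2 := by
    rw [hz₀def, hZdef, hsCdef]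
    push_cast
    ring
  have hZDt : ZD t = -(2*sC*cC) := by
    rw [hZDdef, hsCdef, hcCdef]
    push_cast
    ring
  have hZDDt : ZDD t = -(2*(cC*cC + sC*sC)) := by
    rw [hZDDdef, hsCdef, hcCdef]
    push_cast
    ring
  have hcoefcast : ((((p : ℝ) + (q : ℝ)) * (Real.cosh t / Real.sinh t)
        + (q : ℝ) * Real.tanh t : ℝ) : ℂ)
      = ((p:ℂ)+(q:ℂ))*(cC/sC) + (q:ℂ)*(sC/cC) := by
    rw [Real.tanh_eq_sinh_div_cosh, hsCdef, hcCdef]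
    push_cast
    ring
  rw [hz₀s] at hODE
  rw [← hz₀def, hz₀s, hZDt, hZDDt, hcoefcast]
  set X₀ : ℂ := F₀ (-sC^2) with hX₀def
  set X₁ : ℂ := F₁ (-sC^2) with hX₁def
  set X₂ : ℂ := F₂ (-sC^2) with hX₂def
  have hcoef : (((p:ℂ)+(q:ℂ))*(cC/sC) + (q:ℂ)*(sC/cC)) * (-(2*sC*cC))
      = -(2*((p:ℂ)+(q:ℂ))*cC^2) - 2*(q:ℂ)*sC^2 := by
    field_simp
    ring
  rw [ha, hb, hc] at hODE
  linear_combination (-4:ℂ) * hODE + (4*sC^2*X₂ - 2*((p:ℂ)+(q:ℂ)+1)*X₁) * hch + X₁ * hcoef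
end

section
/- Let a, b, c ∈ ℂ with c not equal to a nonpositive integer. Then the Gauss hypergeometric series F(a,b,c;z) = Σ_{k=0}^∞ ((a)_k (b)_k / ((c)_k · k!)) · z^k converges for every complex z with |z| < 1, satisfies F(a,b,c;0) = 1, and the function z ↦ F(a,b,c;z) satisfies the hypergeometric differential equation z(z−1)·F'' + ((a+b+1)z − c)·F' + ab·F = 0 on the open unit disc. -/
open Filter Finset
open scoped Topology

namespace GaussHyp

noncomputable def u (a b c : ℂ) (k : ℕ) : ℂ :=
  (∏ i ∈ Finset.range k, (a + i)) * (∏ i ∈ Finset.range k, (b + i)) /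
    ((∏ i ∈ Finset.range k, (c + i)) * (Nat.factorial k : ℂ))

noncomputable def Q (a b c : ℂ) (k : ℕ) : ℝ :=
  ‖(a + k) * (b + k) / ((c + k) * ((k : ℂ) + 1))‖

variable {a b c : ℂ}

lemma hc_ne (hc : ∀ n : ℕ, c ≠ -(n : ℂ)) (k : ℕ) : c + (k : ℂ) ≠ 0 := by
  intro h; exact hc k (by linear_combination h)

lemma prodc_ne (hc : ∀ n : ℕ, c ≠ -(n : ℂ)) (k : ℕ) :
    (∏ i ∈ Finset.range k, (c + (i : ℂ))) ≠ 0 :=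
  Finset.prod_ne_zero_iff.2 fun i _ ↦ hc_ne hc i

lemma u_rec (hc : ∀ n : ℕ, c ≠ -(n : ℂ)) (k : ℕ) :
    u a b c (k + 1) * ((c + k) * ((k : ℂ) + 1)) = u a b c k * ((a + k) * (b + k)) := by
  have h1 : (∏ i ∈ Finset.range k, (c + (i : ℂ))) ≠ 0 := prodc_ne hc k
  have h2 : ((Nat.factorial k : ℂ)) ≠ 0 := Nat.cast_ne_zero.2 (Nat.factorial_ne_zero k)
  have h3 : c + (k : ℂ) ≠ 0 := hc_ne hc k
  have h4 : ((k : ℂ) + 1) ≠ 0 := Nat.cast_add_one_ne_zero k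
  simp only [u, Finset.prod_range_succ, Nat.factorial_succ]
  push_cast
  field_simp

lemma u_abs (hc : ∀ n : ℕ, c ≠ -(n : ℂ)) (k : ℕ) :
    ‖u a b c (k + 1)‖ = Q a b c k * ‖u a b c k‖ := by
  have h3 : c + (k : ℂ) ≠ 0 := hc_ne hc k
  have h4 : ((k : ℂ) + 1) ≠ 0 := Nat.cast_add_one_ne_zero k
  have h : u a b c (k + 1) = u a b c k * ((a + k) * (b + k) / ((c + k) * ((k : ℂ) + 1))) := by
    rw [← mul_div_assoc, eq_div_iff (mul_ne_zero h3 h4)]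
    exact u_rec hc k
  rw [h, norm_mul, mul_comm, Q]

lemma norm_add_nat_tendsto (e : ℂ) : Tendsto (fun k : ℕ ↦ ‖e + k‖) atTop atTop := by
  apply tendsto_atTop_mono' _ _
    (tendsto_atTop_add_const_right atTop (-‖e‖) tendsto_natCast_atTop_atTop)
  filter_upwards with k
  have h := norm_sub_norm_le ((k : ℂ)) (-e)
  simp only [sub_neg_eq_add, norm_neg, Complex.norm_natCast] at h
  have : e + (k : ℂ) = (k : ℂ) + e := by ring
  rw [this]
  linarith

lemma inv_tendsto_zero (e : ℂ) : Tendsto (fun k : ℕ ↦ (e + (k : ℂ))⁻¹) atTop (𝓝 0) := by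
  rw [tendsto_zero_iff_norm_tendsto_zero]
  simp only [norm_inv]
  exact (norm_add_nat_tendsto e).inv_tendsto_atTop

lemma ratio_tendsto (d e : ℂ) (he : ∀ k : ℕ, e + (k : ℂ) ≠ 0) :
    Tendsto (fun k : ℕ ↦ (d + k) / (e + k)) atTop (𝓝 1) := by
  have h : ∀ k : ℕ, (d + k) / (e + k) = (d - e) * (e + k)⁻¹ + 1 := fun k ↦ by
    field_simp [he k]
    ring
  simp only [h]
  have := ((inv_tendsto_zero e).const_mul (d - e)).add_const 1
  simpa using this

lemma q_tendsto (hc : ∀ n : ℕ, c ≠ -(n : ℂ)) :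
    Tendsto (Q a b c) atTop (𝓝 1) := by
  have h1 : Tendsto (fun k : ℕ ↦ (a + k) / ((1 : ℂ) + k)) atTop (𝓝 1) :=
    ratio_tendsto a 1 fun k ↦ by
      simpa [add_comm] using (Nat.cast_add_one_ne_zero k : ((k : ℂ) + 1) ≠ 0)
  have h2 : Tendsto (fun k : ℕ ↦ (b + k) / (c + k)) atTop (𝓝 1) :=
    ratio_tendsto b c (hc_ne hc)
  have h3 : Tendsto (fun k : ℕ ↦ ‖(a + k) / ((1 : ℂ) + k) * ((b + k) / (c + k))‖)
      atTop (𝓝 1) := by simpa using (h1.mul h2).norm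
  have key : ∀ k : ℕ, Q a b c k = ‖(a + k) / ((1 : ℂ) + k) * ((b + k) / (c + k))‖ := fun k ↦ by
    rw [Q, div_mul_div_comm]
    ring_nf
  exact h3.congr fun k ↦ (key k).symm

lemma summable_key (hc : ∀ n : ℕ, c ≠ -(n : ℂ)) (m : ℕ) {r : ℝ} (hr0 : 0 ≤ r) (hr1 : r < 1) :
    Summable (fun k : ℕ ↦ ((k : ℝ) + 1) ^ m * ‖u a b c k‖ * r ^ k) := by
  apply summable_of_ratio_norm_eventually_le (show (1 + r) / 2 < 1 by linarith)
  have h1 : Tendsto (fun k : ℕ ↦ ((k : ℝ) + 2) / ((k : ℝ) + 1)) atTop (𝓝 1) := by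
    have h0 : Tendsto (fun n : ℕ ↦ 1 / ((n : ℝ) + 1)) atTop (𝓝 0) :=
      tendsto_one_div_add_atTop_nhds_zero_nat
    have h2 := h0.const_add (1 : ℝ)
    have he : ∀ k : ℕ, (1 : ℝ) + 1 / ((k : ℝ) + 1) = ((k : ℝ) + 2) / ((k : ℝ) + 1) := fun k ↦ by
      have : ((k : ℝ) + 1) ≠ 0 := by positivity
      field_simp
      ring
    simp only [he] at h2
    simpa using h2
  have hC : Tendsto (fun k : ℕ ↦ (((k : ℝ) + 2) / ((k : ℝ) + 1)) ^ m * Q a b c k * r)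
      atTop (𝓝 r) := by
    have := ((h1.pow m).mul (q_tendsto (a := a) (b := b) hc)).mul_const r
    simpa using this
  have hev := hC.eventually (eventually_le_nhds (show r < (1 + r) / 2 by linarith))
  filter_upwards [hev] with k hk
  have hfk : (0 : ℝ) ≤ ((k : ℝ) + 1) ^ m * ‖u a b c k‖ * r ^ k := by positivity
  rw [Real.norm_of_nonneg (by positivity), Real.norm_of_nonneg hfk]
  have hne : ((k : ℝ) + 1) ≠ 0 := by positivity
  have hkey : ((↑(k + 1) : ℝ) + 1) ^ m * ‖u a b c (k + 1)‖ * r ^ (k + 1)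
      = ((((k : ℝ) + 2) / ((k : ℝ) + 1)) ^ m * Q a b c k * r)
        * (((k : ℝ) + 1) ^ m * ‖u a b c k‖ * r ^ k) := by
    rw [u_abs hc k, div_pow]
    push_cast
    field_simp
    ring
  rw [hkey]
  exact mul_le_mul_of_nonneg_right hk hfk

noncomputable def g1 (a b c : ℂ) (n : ℕ) (w : ℂ) : ℂ :=
  u a b c n * ((n : ℂ) * w ^ (n - 1))

noncomputable def g2 (a b c : ℂ) (n : ℕ) (w : ℂ) : ℂ :=
  u a b c n * ((n : ℂ) * (((n - 1 : ℕ) : ℂ) * w ^ (n - 1 - 1)))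

lemma hasDerivAt_term (n : ℕ) (w : ℂ) :
    HasDerivAt (fun y : ℂ ↦ u a b c n * y ^ n) (g1 a b c n w) w :=
  (hasDerivAt_pow n w).const_mul _

lemma hasDerivAt_g1 (n : ℕ) (w : ℂ) :
    HasDerivAt (g1 a b c n) (g2 a b c n w) w :=
  (((hasDerivAt_pow (n - 1) w).const_mul ((n : ℂ))).const_mul (u a b c n))

lemma bound_g1 (n : ℕ) {r : ℝ} {y : ℂ} (hr : 0 < r) (hy : ‖y‖ ≤ r) :
    ‖g1 a b c n y‖ ≤ ((n : ℝ) + 1) ^ 1 * ‖u a b c n‖ * r ^ n * r⁻¹ := by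
  have hn : ‖g1 a b c n y‖ = ‖u a b c n‖ * ((n : ℝ) * ‖y‖ ^ (n - 1)) := by
    simp [g1, norm_mul, norm_pow]
  rw [hn]
  match n with
  | 0 => simp; positivity
  | (k + 1) =>
    have h1 : ‖y‖ ^ k ≤ r ^ k := pow_le_pow_left₀ (norm_nonneg _) hy k
    have h2 : r ^ (k + 1) * r⁻¹ = r ^ k := by
      rw [pow_succ, mul_assoc, mul_inv_cancel₀ hr.ne', mul_one]
    push_cast
    simp only [Nat.add_sub_cancel, pow_one]
    rw [mul_assoc, h2]
    have hu := norm_nonneg (u a b c (k + 1))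
    have hk : (0 : ℝ) ≤ (k : ℝ) := Nat.cast_nonneg k
    nlinarith [mul_le_mul_of_nonneg_left h1 (mul_nonneg hu (by positivity : (0:ℝ) ≤ (k:ℝ)+1)),
      mul_nonneg hu (pow_nonneg hr.le k)]

lemma bound_g2 (n : ℕ) {r : ℝ} {y : ℂ} (hr : 0 < r) (hy : ‖y‖ ≤ r) :
    ‖g2 a b c n y‖ ≤ ((n : ℝ) + 1) ^ 2 * ‖u a b c n‖ * r ^ n * (r⁻¹ * r⁻¹) := by
  have hn : ‖g2 a b c n y‖
      = ‖u a b c n‖ * ((n : ℝ) * (((n - 1 : ℕ) : ℝ) * ‖y‖ ^ (n - 1 - 1))) := by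
    simp [g2, norm_mul, norm_pow]
  rw [hn]
  match n with
  | 0 => simp; positivity
  | 1 => simp; positivity
  | (k + 2) =>
    have h1 : ‖y‖ ^ k ≤ r ^ k := pow_le_pow_left₀ (norm_nonneg _) hy k
    have h2 : r ^ (k + 2) * (r⁻¹ * r⁻¹) = r ^ k := by
      rw [pow_succ, pow_succ]
      field_simp
    simp only [Nat.add_sub_cancel, show k + 2 - 1 = k + 1 from rfl,
      show k + 1 - 1 = k from rfl]
    push_cast
    rw [mul_assoc, h2]
    have hu := norm_nonneg (u a b c (k + 2))
    have hk : (0 : ℝ) ≤ (k : ℝ) := Nat.cast_nonneg k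
    nlinarith [mul_le_mul_of_nonneg_left h1
        (mul_nonneg hu (by positivity : (0:ℝ) ≤ ((k:ℝ)+2)*((k:ℝ)+1))),
      mul_nonneg hu (pow_nonneg hr.le k)]

noncomputable def D1 (a b c : ℂ) (w : ℂ) : ℂ := ∑' n : ℕ, g1 a b c n w
noncomputable def D2 (a b c : ℂ) (w : ℂ) : ℂ := ∑' n : ℕ, g2 a b c n w

lemma hasDerivAt_F (hc : ∀ n : ℕ, c ≠ -(n : ℂ)) {F : ℂ → ℂ}
    (hF : ∀ z : ℂ, F z = ∑' n : ℕ, u a b c n * z ^ n) {w : ℂ} (hw : ‖w‖ < 1) :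
    HasDerivAt F (D1 a b c w) w := by
  have hF' : F = fun z ↦ ∑' n : ℕ, u a b c n * z ^ n := funext hF
  set r : ℝ := (‖w‖ + 1) / 2 with hrdef
  have hn0 := norm_nonneg w
  have hr0 : 0 < r := by positivity
  have hr1 : r < 1 := by rw [hrdef]; linarith
  have hwr : w ∈ Metric.ball (0 : ℂ) r := by
    rw [Metric.mem_ball, dist_zero_right, hrdef]; linarith
  have hbnd : Summable (fun n : ℕ ↦ ((n : ℝ) + 1) ^ 1 * ‖u a b c n‖ * r ^ n * r⁻¹) :=
    (summable_key hc 1 hr0.le hr1).mul_right r⁻¹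
  rw [hF']
  refine hasDerivAt_tsum_of_isPreconnected hbnd Metric.isOpen_ball
    ((convex_ball _ _).isPreconnected) (fun n y _ ↦ hasDerivAt_term n y)
    (fun n y hy ↦ bound_g1 n hr0 (mem_ball_zero_iff.1 hy).le)
    (Metric.mem_ball_self hr0) ?_ hwr
  apply summable_of_ne_finset_zero (s := Finset.range 1)
  intro n hn
  simp only [Finset.mem_range, Nat.lt_one_iff] at hn
  simp [zero_pow hn]

lemma hasDerivAt_D1 (hc : ∀ n : ℕ, c ≠ -(n : ℂ)) {w : ℂ} (hw : ‖w‖ < 1) :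
    HasDerivAt (D1 a b c) (D2 a b c w) w := by
  set r : ℝ := (‖w‖ + 1) / 2 with hrdef
  have hn0 := norm_nonneg w
  have hr0 : 0 < r := by positivity
  have hr1 : r < 1 := by rw [hrdef]; linarith
  have hwr : w ∈ Metric.ball (0 : ℂ) r := by
    rw [Metric.mem_ball, dist_zero_right, hrdef]; linarith
  have hbnd : Summable (fun n : ℕ ↦ ((n : ℝ) + 1) ^ 2 * ‖u a b c n‖ * r ^ n * (r⁻¹ * r⁻¹)) :=
    (summable_key hc 2 hr0.le hr1).mul_right (r⁻¹ * r⁻¹)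
  refine hasDerivAt_tsum_of_isPreconnected hbnd Metric.isOpen_ball
    ((convex_ball _ _).isPreconnected) (fun n y _ ↦ hasDerivAt_g1 n y)
    (fun n y hy ↦ bound_g2 n hr0 (mem_ball_zero_iff.1 hy).le)
    (Metric.mem_ball_self hr0) ?_ hwr
  apply summable_of_ne_finset_zero (s := Finset.range 2)
  intro n hn
  simp only [Finset.mem_range, not_lt] at hn
  have : n - 1 ≠ 0 := by omega
  simp [g1, zero_pow this]

lemma summable_f (hc : ∀ n : ℕ, c ≠ -(n : ℂ)) {z : ℂ} (hz : ‖z‖ < 1) :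
    Summable (fun n : ℕ ↦ u a b c n * z ^ n) := by
  refine Summable.of_norm (((summable_key (a := a) (b := b) hc 0 (norm_nonneg z) hz)).congr fun n ↦ ?_)
  simp [norm_mul, norm_pow]

lemma summable_g1 (hc : ∀ n : ℕ, c ≠ -(n : ℂ)) {z : ℂ} (hz : ‖z‖ < 1) :
    Summable (fun n : ℕ ↦ g1 a b c n z) := by
  set r : ℝ := (‖z‖ + 1) / 2 with hrdef
  have hn0 := norm_nonneg z
  have hr0 : 0 < r := by positivity
  have hr1 : r < 1 := by rw [hrdef]; linarith
  have hzr : ‖z‖ ≤ r := by rw [hrdef]; linarith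
  exact Summable.of_norm_bounded ((summable_key hc 1 hr0.le hr1).mul_right r⁻¹)
    (fun n ↦ bound_g1 n hr0 hzr)

lemma summable_g2 (hc : ∀ n : ℕ, c ≠ -(n : ℂ)) {z : ℂ} (hz : ‖z‖ < 1) :
    Summable (fun n : ℕ ↦ g2 a b c n z) := by
  set r : ℝ := (‖z‖ + 1) / 2 with hrdef
  have hn0 := norm_nonneg z
  have hr0 : 0 < r := by positivity
  have hr1 : r < 1 := by rw [hrdef]; linarith
  have hzr : ‖z‖ ≤ r := by rw [hrdef]; linarith
  exact Summable.of_norm_bounded ((summable_key hc 2 hr0.le hr1).mul_right (r⁻¹ * r⁻¹))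
    (fun n ↦ bound_g2 n hr0 hzr)

lemma summable_v (hc : ∀ n : ℕ, c ≠ -(n : ℂ)) {z : ℂ} (hz : ‖z‖ < 1) :
    Summable (fun n : ℕ ↦ (a + n) * (b + n) * u a b c n * z ^ n) := by
  refine Summable.of_norm_bounded
    (((summable_key (a := a) (b := b) hc 2 (norm_nonneg z) hz)).mul_left ((‖a‖ + 1) * (‖b‖ + 1))) fun n ↦ ?_
  have ha : ‖a + (n : ℂ)‖ ≤ (‖a‖ + 1) * ((n : ℝ) + 1) := by
    have h1 : ‖a + (n : ℂ)‖ ≤ ‖a‖ + n := by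
      simpa [Complex.norm_natCast] using norm_add_le a (n : ℂ)
    have := norm_nonneg a
    have hn : (0 : ℝ) ≤ (n : ℝ) := Nat.cast_nonneg n
    nlinarith
  have hb : ‖b + (n : ℂ)‖ ≤ (‖b‖ + 1) * ((n : ℝ) + 1) := by
    have h1 : ‖b + (n : ℂ)‖ ≤ ‖b‖ + n := by
      simpa [Complex.norm_natCast] using norm_add_le b (n : ℂ)
    have := norm_nonneg b
    have hn : (0 : ℝ) ≤ (n : ℝ) := Nat.cast_nonneg n
    nlinarith
  have hnorm : ‖(a + n) * (b + n) * u a b c n * z ^ n‖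
      = ‖a + (n : ℂ)‖ * ‖b + (n : ℂ)‖ * ‖u a b c n‖ * ‖z‖ ^ n := by
    simp [norm_mul, norm_pow]
  rw [hnorm]
  have hu := norm_nonneg (u a b c n)
  have hzn : (0 : ℝ) ≤ ‖z‖ ^ n := pow_nonneg (norm_nonneg z) n
  calc ‖a + (n : ℂ)‖ * ‖b + (n : ℂ)‖ * ‖u a b c n‖ * ‖z‖ ^ n
      ≤ ((‖a‖ + 1) * ((n : ℝ) + 1)) * ((‖b‖ + 1) * ((n : ℝ) + 1)) * ‖u a b c n‖ * ‖z‖ ^ n := by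
        gcongr <;> positivity
    _ = (‖a‖ + 1) * (‖b‖ + 1) * (((n : ℝ) + 1) ^ 2 * ‖u a b c n‖ * ‖z‖ ^ n) := by ring

lemma partial_sum (hc : ∀ n : ℕ, c ≠ -(n : ℂ)) (z : ℂ) (N : ℕ) :
    ∑ n ∈ Finset.range (N + 1),
      (z * (z - 1) * g2 a b c n z
        + (((a + b + 1) * z - c) * g1 a b c n z + a * b * (u a b c n * z ^ n)))
    = (a + N) * (b + N) * u a b c N * z ^ N := by
  induction N with
  | zero =>
    simp [g1, g2, u]
  | succ N ih =>
    rw [Finset.sum_range_succ, ih]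
    cases N with
    | zero =>
      have h := u_rec (a := a) (b := b) hc 0
      simp only [g1, g2] at *
      push_cast at h ⊢
      simp
      linear_combination -h
    | succ m =>
      have h := u_rec (a := a) (b := b) hc (m + 1)
      simp only [g1, g2]
      push_cast at h ⊢
      linear_combination (-(z ^ (m + 1))) * h

end GaussHyp


/-- For `a, b, c ∈ ℂ` with `c` not a nonpositive integer, the Gauss hypergeometric series
`F(a,b,c;z) = Σ (a)ₖ(b)ₖ/((c)ₖ k!) zᵏ` converges for `|z| < 1`, satisfies `F(a,b,c;0) = 1`,
and satisfies the hypergeometric equation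
`z(z−1) F'' + ((a+b+1)z − c) F' + ab F = 0` on the open unit disc. -/
theorem gauss_hypergeometric_series (a b c : ℂ) (hc : ∀ n : ℕ, c ≠ -(n : ℂ))
    (F : ℂ → ℂ)
    (hF : ∀ z : ℂ, F z = ∑' k : ℕ,
      (∏ i ∈ Finset.range k, (a + i)) * (∏ i ∈ Finset.range k, (b + i)) /
          ((∏ i ∈ Finset.range k, (c + i)) * (Nat.factorial k : ℂ)) * z ^ k) :
    (∀ z : ℂ, ‖z‖ < 1 → Summable fun k : ℕ =>
      (∏ i ∈ Finset.range k, (a + i)) * (∏ i ∈ Finset.range k, (b + i)) /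
          ((∏ i ∈ Finset.range k, (c + i)) * (Nat.factorial k : ℂ)) * z ^ k) ∧
    F 0 = 1 ∧
    (∀ z : ℂ, ‖z‖ < 1 →
      z * (z - 1) * deriv (deriv F) z + ((a + b + 1) * z - c) * deriv F z + a * b * F z = 0) := by
  open Filter Topology GaussHyp in
  have hF' : ∀ z : ℂ, F z = ∑' n : ℕ, GaussHyp.u a b c n * z ^ n := hF
  refine ⟨?_, ?_, ?_⟩
  · intro z hz
    have hz' : ‖z‖ < 1 := hz
    exact GaussHyp.summable_f hc hz'
  · rw [hF' 0, tsum_eq_single 0 (fun n hn ↦ by simp [zero_pow hn])]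
    simp [GaussHyp.u]
  · intro z hz
    have hz' : ‖z‖ < 1 := hz
    have hdF : ∀ w : ℂ, ‖w‖ < 1 → deriv F w = GaussHyp.D1 a b c w :=
      fun w hw ↦ (GaussHyp.hasDerivAt_F hc hF' hw).deriv
    have h1 : deriv F z = GaussHyp.D1 a b c z := hdF z hz'
    have h2 : deriv (deriv F) z = GaussHyp.D2 a b c z := by
      have heq : deriv F =ᶠ[nhds z] GaussHyp.D1 a b c := by
        filter_upwards [Metric.isOpen_ball.mem_nhds (mem_ball_zero_iff.2 hz')] with w hw
        exact hdF w (mem_ball_zero_iff.1 hw)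
      rw [heq.deriv_eq]
      exact (GaussHyp.hasDerivAt_D1 hc hz').deriv
    have S0 := GaussHyp.summable_f (a := a) (b := b) hc hz'
    have S1 := GaussHyp.summable_g1 (a := a) (b := b) hc hz'
    have S2 := GaussHyp.summable_g2 (a := a) (b := b) hc hz'
    have hs2 : HasSum (fun n : ℕ ↦ z * (z - 1) * GaussHyp.g2 a b c n z)
        (z * (z - 1) * GaussHyp.D2 a b c z) := S2.hasSum.mul_left _
    have hs1 : HasSum (fun n : ℕ ↦ ((a + b + 1) * z - c) * GaussHyp.g1 a b c n z)
        (((a + b + 1) * z - c) * GaussHyp.D1 a b c z) := S1.hasSum.mul_left _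
    have hs0 : HasSum (fun n : ℕ ↦ a * b * (GaussHyp.u a b c n * z ^ n)) (a * b * F z) := by
      rw [hF' z]; exact S0.hasSum.mul_left _
    have htot := hs2.add (hs1.add hs0)
    have hv : Filter.Tendsto (fun N : ℕ ↦ (a + N) * (b + N) * GaussHyp.u a b c N * z ^ N)
        Filter.atTop (nhds 0) := (GaussHyp.summable_v hc hz').tendsto_atTop_zero
    have hps1 := htot.tendsto_sum_nat.comp (Filter.tendsto_add_atTop_nat 1)
    have hps2 : Filter.Tendsto (fun N : ℕ ↦ (a + N) * (b + N) * GaussHyp.u a b c N * z ^ N)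
        Filter.atTop (nhds (z * (z - 1) * GaussHyp.D2 a b c z
          + (((a + b + 1) * z - c) * GaussHyp.D1 a b c z + a * b * F z))) :=
      hps1.congr fun N ↦ GaussHyp.partial_sum hc z N
    have h0 := tendsto_nhds_unique hps2 hv
    rw [h1, h2]
    linear_combination h0
end

section
/- For every λ ∈ ℝ and every t > 0, ∫₀ᵗ cos(λs) · (t² − s²)^{−1/2} ds = (π/2) · Σ_{k=0}^∞ ((−1)^k / (k!)²) · (λt/2)^{2k}. -/
open MeasureTheory Real Set

private lemma prod_ratio (k : ℕ) :
    (∏ i ∈ Finset.range k, ((2 * (i : ℝ) + 1) / (2 * i + 2)))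
      = (Nat.factorial (2 * k) : ℝ) / (4 ^ k * (Nat.factorial k : ℝ) ^ 2) := by
  induction k with
  | zero => simp
  | succ n ih =>
    rw [Finset.prod_range_succ, ih]
    have e1 : 2 * (n + 1) = (2 * n + 1) + 1 := by ring
    have h1 : ((2 * n).factorial : ℝ) ≠ 0 := by positivity
    have h2 : ((n).factorial : ℝ) ≠ 0 := by positivity
    have e2 : ((2 * (n + 1)).factorial : ℝ)
        = (2 * n + 2) * (2 * n + 1) * (2 * n).factorial := by
      rw [e1, Nat.factorial_succ, Nat.factorial_succ]; push_cast; ring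
    have e3 : ((n + 1).factorial : ℝ) = (n + 1) * n.factorial := by
      rw [Nat.factorial_succ]; push_cast; ring
    rw [e2, e3]
    have h3 : (2 * (n : ℝ) + 2) ≠ 0 := by positivity
    field_simp
    ring

private lemma wallis (k : ℕ) :
    (∫ x in (0 : ℝ)..(π / 2), Real.sin x ^ (2 * k))
      = (π / 2) * ((Nat.factorial (2 * k) : ℝ) / (4 ^ k * (Nat.factorial k : ℝ) ^ 2)) := by
  have hcont : ∀ a b : ℝ, IntervalIntegrable (fun x => Real.sin x ^ (2 * k)) volume a b :=
    fun a b => (Real.continuous_sin.pow _).intervalIntegrable a b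
  have hsymm : (∫ x in (π / 2)..π, Real.sin x ^ (2 * k))
      = ∫ x in (0 : ℝ)..(π / 2), Real.sin x ^ (2 * k) := by
    have h := intervalIntegral.integral_comp_sub_left (a := 0) (b := π / 2)
      (fun x => Real.sin x ^ (2 * k)) π
    simp only [Real.sin_pi_sub] at h
    have h2 : π - π / 2 = π / 2 := by ring
    have h3 : π - 0 = π := by ring
    rw [h2, h3] at h
    exact h.symm
  have hadd : (∫ x in (0 : ℝ)..π, Real.sin x ^ (2 * k))
      = (∫ x in (0 : ℝ)..(π / 2), Real.sin x ^ (2 * k))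
        + ∫ x in (π / 2)..π, Real.sin x ^ (2 * k) :=
    (intervalIntegral.integral_add_adjacent_intervals (hcont _ _) (hcont _ _)).symm
  have hfull := integral_sin_pow_even (n := k)
  rw [hadd, hsymm, prod_ratio] at hfull
  linarith

private lemma key_rpow (t x : ℝ) (h : 0 < t * Real.cos x) :
    (t ^ 2 - (t * Real.sin x) ^ 2) ^ (-(1 / 2) : ℝ) = (t * Real.cos x)⁻¹ := by
  have e : t ^ 2 - (t * Real.sin x) ^ 2 = (t * Real.cos x) ^ 2 := by
    have := Real.sin_sq_add_cos_sq x; nlinarith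
  rw [e, ← Real.rpow_natCast (t * Real.cos x) 2, ← Real.rpow_mul h.le]
  norm_num
  rw [Real.rpow_neg_one, mul_inv_rev]

/-- Integrability of the truncated spherical integrand. -/
private lemma integrable_g (lam t : ℝ) (ht : 0 < t) :
    IntegrableOn (fun s => Real.cos (lam * s) * (t ^ 2 - s ^ 2) ^ (-(1 / 2) : ℝ))
      (Ioo (0 : ℝ) t) := by
  have hmeas : AEStronglyMeasurable
      (fun s : ℝ => Real.cos (lam * s) * (t ^ 2 - s ^ 2) ^ (-(1 / 2) : ℝ))
      (volume.restrict (Ioo (0:ℝ) t)) := by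
    apply ContinuousOn.aestronglyMeasurable _ measurableSet_Ioo
    apply ContinuousOn.mul
    · exact (Real.continuous_cos.comp (continuous_const.mul continuous_id)).continuousOn
    · apply ContinuousOn.rpow_const
      · exact (continuous_const.sub (continuous_pow 2)).continuousOn
      · intro s hs
        left
        have : 0 < t ^ 2 - s ^ 2 := by nlinarith [hs.1, hs.2]
        exact ne_of_gt this
  have hint : IntegrableOn (fun s : ℝ => t ^ (-(1 / 2) : ℝ) * (t - s) ^ (-(1 / 2) : ℝ))
      (Ioo (0 : ℝ) t) := by
    have h0 : IntervalIntegrable (fun x : ℝ => x ^ (-(1 / 2) : ℝ)) volume 0 t :=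
      intervalIntegral.intervalIntegrable_rpow' (by norm_num)
    have h1 : IntervalIntegrable (fun x : ℝ => (t - x) ^ (-(1 / 2) : ℝ)) volume 0 t := by
      have := h0.comp_sub_left t
      simpa using this.symm
    have h2 := h1.const_mul (t ^ (-(1 / 2) : ℝ))
    have h3 : IntegrableOn (fun s : ℝ => t ^ (-(1 / 2) : ℝ) * (t - s) ^ (-(1 / 2) : ℝ))
        (Ioc (0 : ℝ) t) := by
      rw [← intervalIntegrable_iff_integrableOn_Ioc_of_le ht.le]; exact h2
    exact h3.mono_set Ioo_subset_Ioc_self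
  refine Integrable.mono' hint hmeas ?_
  rw [ae_restrict_iff' measurableSet_Ioo]
  refine Filter.Eventually.of_forall fun s hs => ?_
  obtain ⟨hs0, hst⟩ := hs
  have hpos : 0 < t ^ 2 - s ^ 2 := by nlinarith
  have htms : 0 < t - s := by linarith
  have hfac : t ^ 2 - s ^ 2 = (t - s) * (t + s) := by ring
  have hrw : (t ^ 2 - s ^ 2) ^ (-(1 / 2) : ℝ)
      = (t - s) ^ (-(1 / 2) : ℝ) * (t + s) ^ (-(1 / 2) : ℝ) := by
    rw [hfac, Real.mul_rpow htms.le (by linarith)]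
  have hle : (t + s) ^ (-(1 / 2) : ℝ) ≤ t ^ (-(1 / 2) : ℝ) :=
    Real.rpow_le_rpow_of_nonpos ht (by linarith) (by norm_num)
  have hnn1 : (0 : ℝ) ≤ (t - s) ^ (-(1 / 2) : ℝ) := Real.rpow_nonneg htms.le _
  have hnn2 : (0 : ℝ) ≤ (t ^ 2 - s ^ 2) ^ (-(1 / 2) : ℝ) := Real.rpow_nonneg hpos.le _
  calc ‖Real.cos (lam * s) * (t ^ 2 - s ^ 2) ^ (-(1 / 2) : ℝ)‖
      ≤ 1 * (t ^ 2 - s ^ 2) ^ (-(1 / 2) : ℝ) := by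
        rw [norm_mul]
        gcongr
        · exact abs_cos_le_one _
        · rw [Real.norm_of_nonneg hnn2]
    _ = (t - s) ^ (-(1 / 2) : ℝ) * (t + s) ^ (-(1 / 2) : ℝ) := by rw [one_mul, hrw]
    _ ≤ (t - s) ^ (-(1 / 2) : ℝ) * t ^ (-(1 / 2) : ℝ) := by gcongr
    _ = t ^ (-(1 / 2) : ℝ) * (t - s) ^ (-(1 / 2) : ℝ) := by ring

/-- `∫₀ᵗ cos(λs) (t² − s²)^{−1/2} ds = (π/2) Σ ((−1)ᵏ/(k!)²) (λt/2)^{2k}`: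
the truncated spherical integral on `SL(2,ℝ)` equals `(π/2) J₀(λt)`. -/
theorem integral_eq_bessel (lam t : ℝ) (ht : 0 < t) :
    (∫ s in Set.Ioo (0 : ℝ) t, Real.cos (lam * s) * (t ^ 2 - s ^ 2) ^ (-(1 / 2) : ℝ))
      = (Real.pi / 2) *
        ∑' k : ℕ, ((-1) ^ k / ((Nat.factorial k : ℝ)) ^ 2) * (lam * t / 2) ^ (2 * k) := by
  set g : ℝ → ℝ := fun s => Real.cos (lam * s) * (t ^ 2 - s ^ 2) ^ (-(1 / 2) : ℝ) with hg
  set c : ℝ := lam * t with hc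
  have hpi2 : (0 : ℝ) < π / 2 := by positivity
  have hmin : min (0 : ℝ) (π / 2) = 0 := min_eq_left hpi2.le
  have hmax : max (0 : ℝ) (π / 2) = π / 2 := max_eq_right hpi2.le
  -- Step 0: from set integral to interval integral
  have step0 : (∫ s in Set.Ioo (0 : ℝ) t, g s) = ∫ s in (0 : ℝ)..t, g s := by
    rw [intervalIntegral.integral_of_le ht.le, MeasureTheory.integral_Ioc_eq_integral_Ioo]
  -- Step 1: substitution s = t sin θ
  have himg_Ioo : (fun θ : ℝ => t * Real.sin θ) '' Ioo 0 (π / 2) ⊆ Ioo 0 t := by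
    rintro _ ⟨θ, hθ, rfl⟩
    constructor
    · exact mul_pos ht (Real.sin_pos_of_pos_of_lt_pi hθ.1 (hθ.2.trans (by linarith [pi_pos])))
    · have hcosθ : 0 < Real.cos θ :=
        Real.cos_pos_of_mem_Ioo ⟨by linarith [pi_pos, hθ.1], hθ.2⟩
      have hsq := Real.sin_sq_add_cos_sq θ
      have hsnn : 0 ≤ Real.sin θ :=
        Real.sin_nonneg_of_nonneg_of_le_pi hθ.1.le (by linarith [pi_pos, hθ.2])
      have hlt : Real.sin θ < 1 := by nlinarith
      show t * Real.sin θ < t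
      nlinarith
  have hgcont : ContinuousOn g (Ioo 0 t) := by
    apply ContinuousOn.mul
    · exact (Real.continuous_cos.comp (continuous_const.mul continuous_id)).continuousOn
    · apply ContinuousOn.rpow_const
      · exact (continuous_const.sub (continuous_pow 2)).continuousOn
      · intro s hs
        left
        have : 0 < t ^ 2 - s ^ 2 := by nlinarith [hs.1, hs.2]
        exact ne_of_gt this
  have hgint : IntegrableOn g (Icc 0 t) := by
    rw [integrableOn_Icc_iff_integrableOn_Ioo]
    exact integrable_g lam t ht
  have hbound : ∀ x ∈ Icc (0 : ℝ) (π / 2), ‖g (t * Real.sin x) * (t * Real.cos x)‖ ≤ 1 := by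
    intro x hx
    rcases eq_or_lt_of_le hx.2 with h | h
    · have : Real.cos x = 0 := by rw [h]; exact Real.cos_pi_div_two
      simp [this]
    · have hcos : 0 < Real.cos x :=
        Real.cos_pos_of_mem_Ioo ⟨by linarith [hx.1, pi_pos], h⟩
      have htc : 0 < t * Real.cos x := mul_pos ht hcos
      have := key_rpow t x htc
      rw [hg]
      simp only
      rw [this]
      rw [norm_mul, norm_mul]
      have : ‖(t * Real.cos x)⁻¹‖ * ‖t * Real.cos x‖ = 1 := by
        rw [norm_inv, inv_mul_cancel₀ (norm_ne_zero_iff.mpr (ne_of_gt htc))]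
      calc ‖Real.cos (lam * (t * Real.sin x))‖ * ‖(t * Real.cos x)⁻¹‖ * ‖t * Real.cos x‖
          ≤ 1 * ‖(t * Real.cos x)⁻¹‖ * ‖t * Real.cos x‖ := by
            gcongr; exact abs_cos_le_one _
        _ = 1 := by rw [one_mul, this]
  have hptw : ∀ x : ℝ, 0 ≤ x → x < π / 2 →
      g (t * Real.sin x) * (t * Real.cos x) = Real.cos (c * Real.sin x) := by
    intro x hx0 hlt
    have hcos : 0 < Real.cos x := Real.cos_pos_of_mem_Ioo ⟨by linarith [pi_pos], hlt⟩
    have htc : 0 < t * Real.cos x := mul_pos ht hcos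
    rw [hg]
    simp only
    rw [key_rpow t x htc, hc]
    rw [inv_mul_cancel_right₀ (ne_of_gt htc)]
    ring_nf
  have hne : ∀ᵐ x : ℝ, x ≠ π / 2 := by
    rw [ae_iff]
    convert Real.volume_singleton (a := π / 2) using 2
    ext x; simp
  have hcont2 : Continuous fun x => Real.cos (c * Real.sin x) := by fun_prop
  have hg2 : IntegrableOn (fun x => ((g ∘ fun θ => t * Real.sin θ) x) * (t * Real.cos x))
      (uIcc (0:ℝ) (π/2)) := by
    refine Integrable.congr
      ((hcont2.integrableOn_Icc (a := 0) (b := π / 2)).mono_set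
        (uIcc_of_le hpi2.le).subset) ?_
    rw [Filter.EventuallyEq, ae_restrict_iff' measurableSet_uIcc]
    filter_upwards [hne] with x hxne hx
    rw [uIcc_of_le hpi2.le] at hx
    exact (hptw x hx.1 (lt_of_le_of_ne hx.2 hxne)).symm
  -- Step 1: substitution
  have step1 : (∫ x in (0:ℝ)..(π/2), ((g ∘ fun θ => t * Real.sin θ) x) * (t * Real.cos x))
      = ∫ s in (0:ℝ)..t, g s := by
    have h := intervalIntegral.integral_comp_mul_deriv''' (a := 0) (b := π / 2)
      (f := fun θ => t * Real.sin θ) (f' := fun θ => t * Real.cos θ) (g := g)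
      ((continuous_const.mul Real.continuous_sin).continuousOn)
      (by
        intro x hx
        exact ((Real.hasDerivAt_sin x).const_mul t).hasDerivWithinAt)
      (by
        rw [hmin, hmax]
        exact hgcont.mono himg_Ioo)
      (by
        refine hgint.mono_set ?_
        rintro _ ⟨θ, hθ, rfl⟩
        rw [uIcc_of_le hpi2.le] at hθ
        constructor
        · exact mul_nonneg ht.le (Real.sin_nonneg_of_nonneg_of_le_pi hθ.1
            (hθ.2.trans (by linarith [pi_pos])))
        · exact mul_le_of_le_one_right ht.le (Real.sin_le_one θ))
      hg2
    rw [h]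
    norm_num
  -- Step 2: the substituted integrand equals cos (c sin x) a.e.
  have step2 : (∫ x in (0:ℝ)..(π/2), ((g ∘ fun θ => t * Real.sin θ) x) * (t * Real.cos x))
      = ∫ x in (0:ℝ)..(π/2), Real.cos (c * Real.sin x) := by
    apply intervalIntegral.integral_congr_ae
    filter_upwards [hne] with x hxne hx
    rw [uIoc_of_le hpi2.le] at hx
    exact hptw x hx.1.le (lt_of_le_of_ne hx.2 hxne)
  -- Step 3: expand cosine as a power series and integrate term by term
  set F : ℕ → ℝ → ℝ := fun k x => (-1) ^ k * (c * Real.sin x) ^ (2 * k) / (2 * k).factorial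
    with hF
  have hFint : ∀ k, Integrable (F k) (volume.restrict (Ioc (0:ℝ) (π/2))) := by
    intro k
    apply Continuous.integrableOn_Ioc
    fun_prop
  have hFnorm : ∀ k, (∫ x in Ioc (0:ℝ) (π/2), ‖F k x‖)
      ≤ (|c| ^ (2 * k) / (2 * k).factorial) * (π / 2) := by
    intro k
    have hnn : (0:ℝ) ≤ ∫ x in Ioc (0:ℝ) (π/2), ‖F k x‖ :=
      integral_nonneg fun x => norm_nonneg _
    have hb : ∀ x ∈ Ioc (0:ℝ) (π/2), ‖(‖F k x‖)‖ ≤ |c| ^ (2 * k) / (2 * k).factorial := by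
      intro x hx
      have h2 : |c * Real.sin x| ≤ |c| := by
        rw [abs_mul]
        calc |c| * |Real.sin x| ≤ |c| * 1 := by
              gcongr; exact abs_sin_le_one x
          _ = |c| := mul_one _
      have e : ‖F k x‖ = |c * Real.sin x| ^ (2 * k) / ((2 * k).factorial : ℝ) := by
        rw [hF]
        simp only
        rw [norm_div, norm_mul, norm_pow, norm_pow, Real.norm_natCast, norm_neg,
          norm_one, one_pow, one_mul, Real.norm_eq_abs]
      rw [norm_norm, e]
      have hp : ((0:ℝ)) < (2 * k).factorial := by positivity
      exact (div_le_div_iff_of_pos_right hp).2 (pow_le_pow_left₀ (abs_nonneg _) h2 _)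
    have := norm_setIntegral_le_of_norm_le_const (μ := volume)
      (s := Ioc (0:ℝ) (π/2)) (f := fun x => ‖F k x‖)
      (by rw [Real.volume_Ioc]; exact ENNReal.ofReal_lt_top) hb
    rw [Real.norm_of_nonneg hnn] at this
    calc (∫ x in Ioc (0:ℝ) (π/2), ‖F k x‖)
        ≤ |c| ^ (2 * k) / (2 * k).factorial * (volume (Ioc (0:ℝ) (π/2))).toReal := this
      _ = (|c| ^ (2 * k) / (2 * k).factorial) * (π / 2) := by
          rw [Real.volume_Ioc, sub_zero, ENNReal.toReal_ofReal hpi2.le]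
  have hsummable : Summable fun k => ∫ x in Ioc (0:ℝ) (π/2), ‖F k x‖ := by
    have h1 : Summable fun k : ℕ => |c| ^ (2 * k) / ((2 * k).factorial : ℝ) := by
      exact (Real.summable_pow_div_factorial |c|).comp_injective
        (i := fun k : ℕ => 2 * k) (fun a b h => Nat.eq_of_mul_eq_mul_left (by norm_num) h)
    refine Summable.of_nonneg_of_le (fun k => integral_nonneg fun x => norm_nonneg _)
      hFnorm (h1.mul_right (π / 2))
  have step3 : (∫ x in (0:ℝ)..(π/2), Real.cos (c * Real.sin x))
      = ∑' k : ℕ, ∫ x in Ioc (0:ℝ) (π/2), F k x := by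
    rw [intervalIntegral.integral_of_le hpi2.le,
      MeasureTheory.integral_tsum_of_summable_integral_norm hFint hsummable]
    apply setIntegral_congr_fun measurableSet_Ioc
    intro x _
    exact Real.cos_eq_tsum (c * Real.sin x)
  -- Step 4: evaluate each term
  have step4 : ∀ k : ℕ, (∫ x in Ioc (0:ℝ) (π/2), F k x)
      = (π / 2) * (((-1) ^ k / ((Nat.factorial k : ℝ)) ^ 2) * (c / 2) ^ (2 * k)) := by
    intro k
    have h1 : (∫ x in Ioc (0:ℝ) (π/2), F k x)
        = ((-1) ^ k * c ^ (2 * k) / (2 * k).factorial) * ∫ x in (0:ℝ)..(π/2),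
            Real.sin x ^ (2 * k) := by
      rw [intervalIntegral.integral_of_le hpi2.le, ← integral_const_mul]
      apply setIntegral_congr_fun measurableSet_Ioc
      intro x _
      rw [hF]
      simp only
      rw [mul_pow]
      ring
    rw [h1, wallis]
    have hfac2 : ((2 * k).factorial : ℝ) ≠ 0 := by positivity
    have hfack : ((k).factorial : ℝ) ≠ 0 := by positivity
    have h4 : ((4 : ℝ)) ^ k = 2 ^ (2 * k) := by
      rw [pow_mul]; norm_num
    have h5 : (c / 2) ^ (2 * k) = c ^ (2 * k) / 4 ^ k := by
      rw [div_pow, h4]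
    rw [h5]
    field_simp
  rw [step0, ← step1, step2, step3]
  rw [tsum_congr step4, tsum_mul_left]
end

section
/- For every λ ∈ ℝ and every t > 0, (1/(2π)) · ∫₀^{2π} (cosh t + sinh t · cos θ)^{iλ − 1/2} dθ = (√2/π) · ∫₀ᵗ cos(λs) · (cosh t − cosh s)^{−1/2} ds, where for x > 0 and w ∈ ℂ the complex power x^w is exp(w · log x). -/
open MeasureTheory Real Set

noncomputable section MehlerAux

private lemma mdA_pos (t θ : ℝ) (ht : 0 < t) :
    0 < Real.cosh t + Real.sinh t * Real.cos θ := by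
  have h1 : 0 ≤ Real.sinh t := (Real.sinh_pos_iff.mpr ht).le
  have h2 : -1 ≤ Real.cos θ := Real.neg_one_le_cos θ
  have h3 : 0 < Real.cosh t - Real.sinh t := by
    rw [Real.cosh_sub_sinh]; exact Real.exp_pos _
  nlinarith

private def mdF (lam t θ : ℝ) : ℂ :=
  Complex.exp ((Complex.I * (lam : ℂ) - 1 / 2) *
    ((Real.log (Real.cosh t + Real.sinh t * Real.cos θ) : ℝ) : ℂ))

private def mdg (lam t s : ℝ) : ℂ :=
  Complex.exp (-(Complex.I * (lam : ℂ)) * (s : ℂ)) *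
    (((Real.sqrt (2 * (Real.cosh t - Real.cosh s)) : ℝ) : ℂ))⁻¹

private lemma mdF_continuous (lam t : ℝ) (ht : 0 < t) : Continuous (mdF lam t) := by
  apply Complex.continuous_exp.comp
  apply Continuous.mul continuous_const
  apply Complex.continuous_ofReal.comp
  apply Continuous.log
  · exact continuous_const.add (continuous_const.mul Real.continuous_cos)
  · exact fun θ => (mdA_pos t θ ht).ne'


private lemma md_hsq (c a b : ℝ) (ha : 0 < a) (e : 2*c*a - a^2 - 1 = b^2) :
    2 * (c - (a + a⁻¹)/2) = b^2 / a := by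
  rw [← e]; field_simp; ring

private lemma md_exp_calc (lam a B : ℝ) (ha : 0 < a) (hB : 0 < B) :
    |B / a| • (Complex.exp (-(Complex.I * (lam : ℂ)) * ((-Real.log a : ℝ) : ℂ)) *
      (((B / Real.sqrt a : ℝ) : ℂ))⁻¹)
      = Complex.exp ((Complex.I * (lam : ℂ) - 1 / 2) * ((Real.log a : ℝ) : ℂ)) := by
  have hsa : 0 < Real.sqrt a := Real.sqrt_pos.mpr ha
  have h1 : Real.exp (Real.log a / 2) = Real.sqrt a := by
    rw [Real.sqrt_eq_rpow, Real.rpow_def_of_pos ha]; ring_nf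
  have hRA : Real.sqrt a / a = Real.exp (-(Real.log a / 2)) := by
    have h2 : Real.exp (-(Real.log a / 2))
        = Real.exp (Real.log a / 2) / Real.exp (Real.log a) := by
      rw [← Real.exp_sub]; congr 1; ring
    rw [h2, h1, Real.exp_log ha]
  rw [abs_of_pos (div_pos hB ha)]
  rw [show (((B / Real.sqrt a : ℝ)) : ℂ)⁻¹ = (((Real.sqrt a / B : ℝ)) : ℂ) by
    rw [← Complex.ofReal_inv, inv_div]]
  rw [Complex.real_smul]
  have hc : ((B / a : ℝ) : ℂ) * ((Real.sqrt a / B : ℝ) : ℂ) = ((Real.sqrt a / a : ℝ) : ℂ) := by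
    rw [← Complex.ofReal_mul]
    congr 1
    field_simp
  calc ((B / a : ℝ) : ℂ) * (Complex.exp (-(Complex.I * lam) * ((-Real.log a : ℝ) : ℂ)) *
          ((Real.sqrt a / B : ℝ) : ℂ))
      = Complex.exp (-(Complex.I * lam) * ((-Real.log a : ℝ) : ℂ)) *
          (((B / a : ℝ) : ℂ) * ((Real.sqrt a / B : ℝ) : ℂ)) := by ring
    _ = Complex.exp (-(Complex.I * lam) * ((-Real.log a : ℝ) : ℂ)) *
          Complex.exp ((-(Real.log a / 2) : ℝ) : ℂ) := by
        rw [hc, hRA, Complex.ofReal_exp]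
    _ = Complex.exp ((Complex.I * (lam : ℂ) - 1 / 2) * ((Real.log a : ℝ) : ℂ)) := by
        rw [← Complex.exp_add]
        congr 1
        push_cast
        ring

private lemma md_key (lam t : ℝ) (ht : 0 < t) :
    (∫ θ in Set.Ioo (0:ℝ) Real.pi, mdF lam t θ) = (∫ s in Set.Ioo (-t) t, mdg lam t s)
      ∧ MeasureTheory.IntegrableOn (mdg lam t) (Set.Ioo (-t) t) := by
  have hsinh : 0 < Real.sinh t := Real.sinh_pos_iff.mpr ht
  set A : ℝ → ℝ := fun θ => Real.cosh t + Real.sinh t * Real.cos θ with hAdef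
  have hApos : ∀ θ, 0 < A θ := fun θ => mdA_pos t θ ht
  set φ : ℝ → ℝ := fun θ => -Real.log (A θ) with hφdef
  set D : ℝ → ℝ := fun θ => Real.sinh t * Real.sin θ / A θ with hDdef
  have hderiv : ∀ θ, HasDerivAt φ (D θ) θ := by
    intro θ
    have hA : HasDerivAt A (Real.sinh t * (-Real.sin θ)) θ := by
      exact ((Real.hasDerivAt_cos θ).const_mul (Real.sinh t)).const_add (Real.cosh t)
    have h2 := (hA.log (hApos θ).ne').neg
    have e : D θ = -(Real.sinh t * -Real.sin θ / A θ) := by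
      show Real.sinh t * Real.sin θ / A θ = _
      ring
    rw [e]; exact h2
  have hmono : StrictMonoOn φ (Set.Icc 0 Real.pi) := by
    intro x hx y hy hxy
    have hcos : Real.cos y < Real.cos x := Real.strictAntiOn_cos hx hy hxy
    have hAlt : A y < A x := by simp only [hAdef]; nlinarith
    have := Real.log_lt_log (hApos y) hAlt
    simp only [hφdef]
    linarith
  have hcont : Continuous φ := by
    apply Continuous.neg
    exact Continuous.log (continuous_const.add (continuous_const.mul Real.continuous_cos))
      fun θ => (hApos θ).ne'
  have hφ0 : φ 0 = -t := by
    simp only [hφdef, hAdef, Real.cos_zero, mul_one, Real.cosh_add_sinh, Real.log_exp]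
  have hφπ : φ Real.pi = t := by
    simp only [hφdef, hAdef, Real.cos_pi, mul_neg_one, ← sub_eq_add_neg,
      Real.cosh_sub_sinh, Real.log_exp, neg_neg]
  have himage : φ '' Set.Ioo 0 Real.pi = Set.Ioo (-t) t := by
    apply Set.Subset.antisymm
    · rintro _ ⟨θ, hθ, rfl⟩
      have h1 := hmono (Set.left_mem_Icc.mpr Real.pi_pos.le) (Set.mem_Icc_of_Ioo hθ) hθ.1
      have h2 := hmono (Set.mem_Icc_of_Ioo hθ) (Set.right_mem_Icc.mpr Real.pi_pos.le) hθ.2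
      exact ⟨hφ0 ▸ h1, hφπ ▸ h2⟩
    · have h := intermediate_value_Ioo Real.pi_pos.le hcont.continuousOn
      rw [hφ0, hφπ] at h
      exact h
  have hinj : Set.InjOn φ (Set.Ioo 0 Real.pi) :=
    hmono.injOn.mono Set.Ioo_subset_Icc_self
  -- pointwise identity
  have hpt : ∀ θ ∈ Set.Ioo 0 Real.pi, |D θ| • mdg lam t (φ θ) = mdF lam t θ := by
    intro θ hθ
    have hsin : 0 < Real.sin θ := Real.sin_pos_of_pos_of_lt_pi hθ.1 hθ.2
    have hB : 0 < Real.sinh t * Real.sin θ := mul_pos hsinh hsin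
    have hcosh : Real.cosh (φ θ) = (A θ + (A θ)⁻¹) / 2 := by
      simp only [hφdef, Real.cosh_neg]
      exact Real.cosh_log (hApos θ)
    have e : (2 * Real.cosh t) * A θ - (A θ)^2 - 1 = (Real.sinh t * Real.sin θ)^2 := by
      simp only [hAdef]
      linear_combination (Real.cosh_sq t) - (Real.sinh t)^2 * (Real.sin_sq_add_cos_sq θ)
    have hsq : 2 * (Real.cosh t - Real.cosh (φ θ)) = (Real.sinh t * Real.sin θ)^2 / A θ := by
      rw [hcosh]
      exact md_hsq (Real.cosh t) (A θ) (Real.sinh t * Real.sin θ) (hApos θ) e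
    have hsqrt : Real.sqrt (2 * (Real.cosh t - Real.cosh (φ θ)))
        = (Real.sinh t * Real.sin θ) / Real.sqrt (A θ) := by
      rw [hsq, Real.sqrt_div (sq_nonneg _), Real.sqrt_sq hB.le]
    have hφθ : φ θ = -Real.log (A θ) := by simp only [hφdef]
    have hDθ : D θ = Real.sinh t * Real.sin θ / A θ := by simp only [hDdef]
    unfold mdg mdF
    rw [hsqrt, hDθ, hφθ]
    exact md_exp_calc lam (A θ) (Real.sinh t * Real.sin θ) (hApos θ) hB
  -- change of variables
  have hCV := integral_image_eq_integral_abs_deriv_smul measurableSet_Ioo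
    (fun x _ => (hderiv x).hasDerivWithinAt) hinj (mdg lam t)
  rw [himage] at hCV
  have hcongr : (∫ θ in Set.Ioo (0:ℝ) Real.pi, |D θ| • mdg lam t (φ θ))
      = ∫ θ in Set.Ioo (0:ℝ) Real.pi, mdF lam t θ :=
    setIntegral_congr_fun measurableSet_Ioo hpt
  constructor
  · rw [← hcongr, ← hCV]
  · have hiff := integrableOn_image_iff_integrableOn_abs_deriv_smul measurableSet_Ioo
      (fun x _ => (hderiv x).hasDerivWithinAt) hinj (mdg lam t)
    rw [himage] at hiff
    rw [hiff]
    have hint : MeasureTheory.IntegrableOn (mdF lam t) (Set.Ioo (0:ℝ) Real.pi) :=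
      ((mdF_continuous lam t ht).integrableOn_Icc).mono_set Set.Ioo_subset_Icc_self
    exact hint.congr_fun (fun x hx => (hpt x hx).symm) measurableSet_Ioo

end MehlerAux

private lemma mdF_periodic (lam t θ : ℝ) : mdF lam t (2 * Real.pi - θ) = mdF lam t θ := by
  unfold mdF
  rw [Real.cos_two_pi_sub]

private lemma md_step1 (lam t : ℝ) (ht : 0 < t) :
    (∫ θ in Set.Ioo (0:ℝ) (2*Real.pi), mdF lam t θ)
      = 2 * ∫ θ in Set.Ioo (0:ℝ) Real.pi, mdF lam t θ := by
  have hc := mdF_continuous lam t ht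
  have hπ := Real.pi_pos
  rw [← integral_Ioc_eq_integral_Ioo, ← integral_Ioc_eq_integral_Ioo]
  rw [← intervalIntegral.integral_of_le (by linarith : (0:ℝ) ≤ 2*Real.pi),
    ← intervalIntegral.integral_of_le hπ.le]
  have hsplit := intervalIntegral.integral_add_adjacent_intervals
    (hc.intervalIntegrable (μ := volume) 0 Real.pi)
    (hc.intervalIntegrable (μ := volume) Real.pi (2*Real.pi))
  have hrefl : (∫ θ in Real.pi..(2*Real.pi), mdF lam t θ)
      = ∫ θ in (0:ℝ)..Real.pi, mdF lam t θ := by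
    have h := intervalIntegral.integral_comp_sub_left (a := 0) (b := Real.pi)
      (mdF lam t) (2*Real.pi)
    simp only [mdF_periodic] at h
    have e1 : 2*Real.pi - Real.pi = Real.pi := by ring
    have e2 : 2*Real.pi - 0 = 2*Real.pi := by ring
    rw [e1, e2] at h
    exact h.symm
  rw [← hsplit, hrefl]
  ring

private noncomputable def mdc (t s : ℝ) : ℝ := (Real.sqrt (2 * (Real.cosh t - Real.cosh s)))⁻¹

private lemma mdg_eq (lam t s : ℝ) :
    mdg lam t s = ((Real.cos (lam*s) * mdc t s : ℝ) : ℂ)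
      - ((Real.sin (lam*s) * mdc t s : ℝ) : ℂ) * Complex.I := by
  unfold mdg mdc
  rw [show -(Complex.I * (lam:ℂ)) * (s:ℂ) = ((-(lam*s) : ℝ) : ℂ) * Complex.I by
    push_cast; ring]
  rw [Complex.exp_mul_I]
  push_cast [Complex.cos_neg, Complex.sin_neg]
  ring

private lemma mdg_re (lam t s : ℝ) : (mdg lam t s).re = Real.cos (lam*s) * mdc t s := by
  rw [mdg_eq]
  simp
  rw [← Complex.ofReal_mul, Complex.cos_ofReal_re, Complex.sin_ofReal_im]
  ring

private lemma mdg_im (lam t s : ℝ) : (mdg lam t s).im = -(Real.sin (lam*s) * mdc t s) := by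
  rw [mdg_eq]
  simp
  rw [← Complex.ofReal_mul, Complex.cos_ofReal_im, Complex.sin_ofReal_re]
  ring

private lemma mdc_even (t s : ℝ) : mdc t (-s) = mdc t s := by
  unfold mdc; rw [Real.cosh_neg]

private lemma md_step4 (lam t : ℝ) (ht : 0 < t)
    (hint : MeasureTheory.IntegrableOn (mdg lam t) (Set.Ioo (-t) t)) :
    (∫ s in Set.Ioo (-t) t, mdg lam t s)
      = (((2 * ∫ s in Set.Ioo (0:ℝ) t, Real.cos (lam*s) * mdc t s : ℝ)) : ℂ) := by
  have hle : (-t) ≤ t := by linarith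
  -- real part function
  set f : ℝ → ℝ := fun s => Real.cos (lam*s) * mdc t s with hfdef
  set g : ℝ → ℝ := fun s => -(Real.sin (lam*s) * mdc t s) with hgdef
  have hfint : MeasureTheory.IntegrableOn f (Set.Ioo (-t) t) := by
    have h' : MeasureTheory.IntegrableOn (fun x => RCLike.re (mdg lam t x))
        (Set.Ioo (-t) t) := hint.re
    exact h'.congr_fun (fun s _ => by simp only [RCLike.re_to_complex, mdg_re, hfdef])
      measurableSet_Ioo
  have hgint : MeasureTheory.IntegrableOn g (Set.Ioo (-t) t) := by
    have h' : MeasureTheory.IntegrableOn (fun x => RCLike.im (mdg lam t x))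
        (Set.Ioo (-t) t) := hint.im
    exact h'.congr_fun (fun s _ => by simp only [RCLike.im_to_complex, mdg_im, hgdef])
      measurableSet_Ioo
  have hfii : IntervalIntegrable f volume (-t) t :=
    (intervalIntegrable_iff_integrableOn_Ioo_of_le hle).mpr hfint
  have hgii : IntervalIntegrable g volume (-t) t :=
    (intervalIntegrable_iff_integrableOn_Ioo_of_le hle).mpr hgint
  have hfeven : ∀ s, f (-s) = f s := by
    intro s
    simp only [hfdef, mdc_even, mul_neg, Real.cos_neg]
  have hgodd : ∀ s, g (-s) = -(g s) := by
    intro s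
    simp only [hgdef, mdc_even, mul_neg, Real.sin_neg, neg_mul, neg_neg]
  -- compute real part integral
  have hofl : ∀ (h : ℝ → ℝ), (∫ s in Set.Ioo (-t) t, h s) = ∫ s in (-t)..t, h s := by
    intro h
    rw [intervalIntegral.integral_of_le hle, integral_Ioc_eq_integral_Ioo]
  have hfdouble : (∫ s in (-t)..t, f s) = 2 * ∫ s in Set.Ioo (0:ℝ) t, f s := by
    have hsub1 : Set.uIcc (-t) (0:ℝ) ⊆ Set.uIcc (-t) t := by
      apply Set.uIcc_subset_uIcc_iff_mem.mpr
      constructor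
      · exact Set.mem_uIcc.mpr (Or.inl ⟨le_refl _, hle⟩)
      · exact Set.mem_uIcc.mpr (Or.inl ⟨by linarith, ht.le⟩)
    have hsub2 : Set.uIcc (0:ℝ) t ⊆ Set.uIcc (-t) t := by
      apply Set.uIcc_subset_uIcc_iff_mem.mpr
      constructor
      · exact Set.mem_uIcc.mpr (Or.inl ⟨by linarith, ht.le⟩)
      · exact Set.mem_uIcc.mpr (Or.inl ⟨hle, le_refl _⟩)
    have hsplit := intervalIntegral.integral_add_adjacent_intervals
      (hfii.mono_set hsub1) (hfii.mono_set hsub2)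
    have hrefl : (∫ s in (-t)..(0:ℝ), f s) = ∫ s in (0:ℝ)..t, f s := by
      have h := intervalIntegral.integral_comp_neg (a := (0:ℝ)) (b := t) f
      simp only [hfeven, neg_zero] at h
      exact h.symm
    rw [← hsplit, hrefl, intervalIntegral.integral_of_le ht.le,
      integral_Ioc_eq_integral_Ioo]
    ring
  have hgzero : (∫ s in (-t)..t, g s) = 0 := by
    have h := intervalIntegral.integral_comp_neg (a := -t) (b := t) g
    rw [neg_neg] at h
    simp only [hgodd] at h
    rw [intervalIntegral.integral_neg] at h
    linarith [h]
  apply Complex.ext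
  · rw [Complex.ofReal_re]
    have := integral_re (μ := volume.restrict (Set.Ioo (-t) t)) hint
    simp only [RCLike.re_to_complex] at this
    rw [← this]
    have : (∫ s in Set.Ioo (-t) t, (mdg lam t s).re) = ∫ s in Set.Ioo (-t) t, f s := by
      apply setIntegral_congr_fun measurableSet_Ioo
      intro s _
      simp only [mdg_re, hfdef]
    rw [this, hofl f, hfdouble]
  · rw [Complex.ofReal_im]
    have := integral_im (μ := volume.restrict (Set.Ioo (-t) t)) hint
    simp only [RCLike.im_to_complex] at this
    rw [← this]
    have : (∫ s in Set.Ioo (-t) t, (mdg lam t s).im) = ∫ s in Set.Ioo (-t) t, g s := by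
      apply setIntegral_congr_fun measurableSet_Ioo
      intro s _
      simp only [mdg_im, hgdef]
    rw [this, hofl g, hgzero]

/-- Mehler–Dirichlet identity:
`(1/2π) ∫₀^{2π} (cosh t + sinh t cos θ)^{iλ−1/2} dθ
  = (√2/π) ∫₀ᵗ cos(λs) (cosh t − cosh s)^{−1/2} ds`,
where for `x > 0` and `w ∈ ℂ` the complex power `x^w` is `exp(w log x)`. -/
theorem mehler_dirichlet (lam t : ℝ) (ht : 0 < t) :
    ((1 / (2 * Real.pi) : ℝ) : ℂ) *
        ∫ θ in Set.Ioo (0 : ℝ) (2 * Real.pi),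
          Complex.exp ((Complex.I * (lam : ℂ) - 1 / 2) *
            ((Real.log (Real.cosh t + Real.sinh t * Real.cos θ) : ℝ) : ℂ))
      = (((Real.sqrt 2 / Real.pi) *
          ∫ s in Set.Ioo (0 : ℝ) t,
            Real.cos (lam * s) * (Real.cosh t - Real.cosh s) ^ (-(1 / 2) : ℝ) : ℝ) : ℂ) := by
  have hπ := Real.pi_pos
  obtain ⟨hkey, hint⟩ := md_key lam t ht
  have h1 := md_step1 lam t ht
  have h4 := md_step4 lam t ht hint
  have h2 : Real.sqrt 2 * Real.sqrt 2 = 2 := Real.mul_self_sqrt (by norm_num)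
  have hreal : (∫ s in Set.Ioo (0:ℝ) t,
        Real.cos (lam * s) * (Real.cosh t - Real.cosh s) ^ (-(1 / 2) : ℝ))
      = Real.sqrt 2 * ∫ s in Set.Ioo (0:ℝ) t, Real.cos (lam*s) * mdc t s := by
    rw [← integral_const_mul]
    apply setIntegral_congr_fun measurableSet_Ioo
    intro s hs
    dsimp only
    have hΔ : 0 < Real.cosh t - Real.cosh s := by
      have : Real.cosh s < Real.cosh t := by
        rw [Real.cosh_lt_cosh, abs_of_pos hs.1, abs_of_pos ht]
        exact hs.2
      linarith
    have hsΔ : 0 < Real.sqrt (Real.cosh t - Real.cosh s) := Real.sqrt_pos.mpr hΔ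
    have h2' : (0:ℝ) < Real.sqrt 2 := by positivity
    rw [Real.rpow_neg hΔ.le, ← Real.sqrt_eq_rpow]
    unfold mdc
    rw [Real.sqrt_mul (by norm_num : (0:ℝ) ≤ 2)]
    field_simp
  have hshow : (∫ θ in Set.Ioo (0 : ℝ) (2 * Real.pi),
        Complex.exp ((Complex.I * (lam : ℂ) - 1 / 2) *
          ((Real.log (Real.cosh t + Real.sinh t * Real.cos θ) : ℝ) : ℂ)))
      = ∫ θ in Set.Ioo (0:ℝ) (2*Real.pi), mdF lam t θ := rfl
  rw [hshow, h1, hkey, h4, hreal]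
  rw [show (2:ℂ) = ((2:ℝ) : ℂ) by norm_num, ← Complex.ofReal_mul, ← Complex.ofReal_mul]
  norm_cast
  field_simp
  linear_combination (-(1:ℝ) * (∫ s in Set.Ioo (0:ℝ) t,
    Real.cos (lam*s) * mdc t s)) * h2
end
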